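/- arXiv:2604.19698 — 5 statements merged into one kernel-verified Lean document; each statement's English description precedes it below -/
import Mathlib

section
/- Let (X, B, μ) be a measure space and let φ_0,…,φ_{N-1} and ψ_0,…,ψ_{N-1} be measurable functions such that φ_k ψ_ℓ ∈ L¹(μ) for all k, ℓ. Then det( (∫ φ_k ψ_ℓ dμ)_{k,ℓ=0}^{N-1} ) = (1/N!) ∫_{X^N} det(Φ(x_{1:N})) det(Ψ(x_{1:N})) dμ^{⊗N}(x), where Φ(x_{1:N}) is the N×N matrix with entries φ_ℓ(x_n) and Ψ(x_{1:N}) the matrix with entries ψ_ℓ(x_n). -/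
open MeasureTheory Matrix BigOperators

open Set in
/-- Monotonicity of `Measure.pi` on measurable sets, without sigma-finiteness. -/
lemma measure_pi_mono_aux {ι : Type*} [Fintype ι] {α : ι → Type*} [∀ i, MeasurableSpace (α i)]
    (μ ν : ∀ i, Measure (α i)) (h : ∀ i, μ i ≤ ν i) {A : Set (∀ i, α i)}
    (hA : MeasurableSet A) : Measure.pi μ A ≤ Measure.pi ν A := by
  rw [Measure.pi_def, Measure.pi_def, toMeasure_apply _ _ hA, toMeasure_apply _ _ hA]
  refine (OuterMeasure.le_pi.2 fun s _ => ?_) A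
  refine (OuterMeasure.pi_pi_le _ s).trans ?_
  exact Finset.prod_le_prod' fun i _ => (Measure.le_iff'.1 (h i)) _

open Set in
/-- Without any sigma-finiteness on `μ`, if `μ.restrict S` is sigma-finite then the restriction
of the product measure to `S^N` agrees with the product of the restricted measures. -/
lemma pi_restrict_eq_aux {X : Type*} [MeasurableSpace X] (μ : Measure X) {S : Set X}
    (hS : MeasurableSet S) [SigmaFinite (μ.restrict S)] (N : ℕ) :
    (Measure.pi fun _ : Fin N => μ).restrict (Set.pi Set.univ fun _ => S)
      = Measure.pi fun _ : Fin N => μ.restrict S := by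
  symm
  refine Measure.pi_eq fun s hs => ?_
  rw [Measure.restrict_apply (MeasurableSet.pi countable_univ fun i _ => hs i)]
  have hbox : (Set.pi univ s ∩ Set.pi univ fun _ => S) = Set.pi univ fun i => s i ∩ S := by
    rw [pi_inter_distrib]
  rw [hbox]
  have hmeas : MeasurableSet (Set.pi univ fun i => s i ∩ S) :=
    MeasurableSet.pi countable_univ fun i _ => (hs i).inter hS
  apply le_antisymm
  · rw [Measure.pi_def, toMeasure_apply _ _ hmeas]
    refine (OuterMeasure.pi_pi_le _ _).trans ?_
    refine le_of_eq (Finset.prod_congr rfl fun i _ => ?_)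
    rw [Measure.restrict_apply (hs i)]; rfl
  · refine le_trans (le_of_eq ?_)
      (measure_pi_mono_aux (fun _ : Fin N => μ.restrict S) (fun _ => μ)
        (fun _ => Measure.restrict_le_self) hmeas)
    rw [Measure.pi_pi]
    refine Finset.prod_congr rfl fun i _ => ?_
    rw [Measure.restrict_apply (hs i), Measure.restrict_apply ((hs i).inter hS),
      Set.inter_assoc, Set.inter_self]

/-- Generalized Cauchy–Binet (Andréief) identity. -/
theorem andreief_identity
    {X : Type*} [MeasurableSpace X] (μ : Measure X) (N : ℕ)
    (φ ψ : Fin N → X → ℝ)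
    (hφ : ∀ k, Measurable (φ k)) (hψ : ∀ k, Measurable (ψ k))
    (hint : ∀ k l, Integrable (fun x => φ k x * ψ l x) μ) :
    Matrix.det (Matrix.of fun k l : Fin N => ∫ x, φ k x * ψ l x ∂μ)
      = (Nat.factorial N : ℝ)⁻¹ *
        ∫ x : Fin N → X,
          Matrix.det (Matrix.of fun n k : Fin N => φ k (x n)) *
          Matrix.det (Matrix.of fun n k : Fin N => ψ k (x n))
          ∂(Measure.pi fun _ => μ) := by
  classical
  -- the integrable "envelope" function and its support
  set g : X → ℝ := fun x => ∑ k : Fin N, ∑ l : Fin N, |φ k x * ψ l x| with hg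
  have hgmeas : Measurable g := by
    apply Finset.measurable_sum
    intro k _
    exact Finset.measurable_sum _ fun l _ => ((hφ k).mul (hψ l)).abs
  have hgint : Integrable g μ :=
    integrable_finset_sum _ fun k _ => integrable_finset_sum _ fun l _ => (hint k l).abs
  set S : Set X := Function.support g with hSdef
  have hSmeas : MeasurableSet S := hgmeas (measurableSet_singleton 0) |>.compl
  have hzero : ∀ x ∉ S, ∀ k l, φ k x * ψ l x = 0 := by
    intro x hx k l
    have hx0 : g x = 0 := Function.notMem_support.1 hx
    have hnonneg : ∀ k : Fin N, 0 ≤ ∑ l : Fin N, |φ k x * ψ l x| :=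
      fun k => Finset.sum_nonneg fun l _ => abs_nonneg _
    have h1 : ∑ l : Fin N, |φ k x * ψ l x| = 0 := by
      have := (Finset.sum_eq_zero_iff_of_nonneg (fun k _ => hnonneg k)).1 hx0 k (Finset.mem_univ k)
      exact this
    have h2 : |φ k x * ψ l x| = 0 :=
      (Finset.sum_eq_zero_iff_of_nonneg (fun l _ => abs_nonneg _)).1 h1 l (Finset.mem_univ l)
    exact abs_eq_zero.1 h2
  -- sigma-finiteness of the restriction
  haveI hsf : SigmaFinite (μ.restrict S) := by
    refine ⟨⟨⟨fun n => {x | (n + 1 : ℝ)⁻¹ ≤ g x} ∪ Sᶜ, fun _ => trivial, fun n => ?_, ?_⟩⟩⟩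
    · have hmeas' : MeasurableSet {x | (n + 1 : ℝ)⁻¹ ≤ g x} :=
        measurableSet_le measurable_const hgmeas
      rw [Measure.restrict_apply' hSmeas]
      refine lt_of_le_of_lt (measure_mono ?_) (hgint.measure_ge_lt_top (ε := (n + 1 : ℝ)⁻¹) ?_)
      · intro x hx
        rcases hx.1 with h | h
        · exact h
        · exact absurd hx.2 h
      · positivity
    · apply Set.eq_univ_of_forall
      intro x
      by_cases hx : x ∈ S
      · have hgpos : 0 < g x := by
          rcases lt_or_eq_of_le (Finset.sum_nonneg fun k _ =>
            Finset.sum_nonneg fun l _ => abs_nonneg _ : (0:ℝ) ≤ g x) with h | h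
          · exact h
          · exact absurd h.symm (Function.mem_support.1 hx)
        obtain ⟨n, hn⟩ := exists_nat_one_div_lt hgpos
        refine Set.mem_iUnion.2 ⟨n, Or.inl ?_⟩
        simp only [Set.mem_setOf_eq]
        rw [one_div] at hn
        exact hn.le
      · exact Set.mem_iUnion.2 ⟨0, Or.inr hx⟩
  set μ' : Measure X := μ.restrict S with hμ'
  -- the entries integrals agree for μ and μ'
  have hentry : ∀ k l, (∫ x, φ k x * ψ l x ∂μ) = ∫ x, φ k x * ψ l x ∂μ' := by
    intro k l
    exact (setIntegral_eq_integral_of_forall_compl_eq_zero fun x hx => hzero x hx k l).symm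
  set T : Set (Fin N → X) := Set.pi Set.univ fun _ => S with hT
  have hTmeas : MeasurableSet T := MeasurableSet.pi Set.countable_univ fun i _ => hSmeas
  set F : (Fin N → X) → ℝ := fun x =>
    Matrix.det (Matrix.of fun n k : Fin N => φ k (x n)) *
    Matrix.det (Matrix.of fun n k : Fin N => ψ k (x n)) with hF
  -- F vanishes outside T
  have hFzero : ∀ x ∉ T, F x = 0 := by
    intro x hx
    rw [hT, Set.mem_pi] at hx
    push_neg at hx
    obtain ⟨n, -, hn⟩ := hx
    by_cases hφ0 : ∀ k, φ k (x n) = 0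
    · simp only [hF]
      exact mul_eq_zero_of_left (Matrix.det_eq_zero_of_row_eq_zero n fun k => hφ0 k) _
    · push_neg at hφ0
      obtain ⟨k0, hk0⟩ := hφ0
      have hψ0 : ∀ l, ψ l (x n) = 0 := by
        intro l
        have := hzero (x n) hn k0 l
        exact (mul_eq_zero.1 this).resolve_left hk0
      simp only [hF]
      exact mul_eq_zero_of_right _ (Matrix.det_eq_zero_of_row_eq_zero n fun l => hψ0 l)
  -- replace the measure by the product of restricted measures
  have hmeasrepl : (∫ x, F x ∂(Measure.pi fun _ => μ)) = ∫ x, F x ∂(Measure.pi fun _ => μ') := by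
    rw [← pi_restrict_eq_aux μ hSmeas N]
    exact (setIntegral_eq_integral_of_forall_compl_eq_zero hFzero).symm
  -- now work with the sigma-finite measure μ'
  letI : MeasureSpace X := ⟨μ'⟩
  haveI : SigmaFinite (volume : Measure X) := hsf
  set A : Matrix (Fin N) (Fin N) ℝ := Matrix.of fun k l : Fin N => ∫ x, φ k x * ψ l x ∂μ'
    with hA
  have hintA : ∀ k l, Integrable (fun x => φ k x * ψ l x) μ' := fun k l =>
    (hint k l).restrict
  -- expand the determinants
  have hFexp : ∀ x : Fin N → X, F x =
      ∑ p : Equiv.Perm (Fin N) × Equiv.Perm (Fin N),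
        (((Equiv.Perm.sign p.1 : ℤ) : ℝ) * ((Equiv.Perm.sign p.2 : ℤ) : ℝ)) *
          ∏ n : Fin N, (φ (p.1 n) (x n) * ψ (p.2 n) (x n)) := by
    intro x
    have h1 : Matrix.det (Matrix.of fun n k : Fin N => φ k (x n)) =
        ∑ σ : Equiv.Perm (Fin N), ((Equiv.Perm.sign σ : ℤ) : ℝ) * ∏ n, φ (σ n) (x n) := by
      rw [← Matrix.det_transpose, Matrix.det_apply']
      rfl
    have h2 : Matrix.det (Matrix.of fun n k : Fin N => ψ k (x n)) =
        ∑ τ : Equiv.Perm (Fin N), ((Equiv.Perm.sign τ : ℤ) : ℝ) * ∏ n, ψ (τ n) (x n) := by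
      rw [← Matrix.det_transpose, Matrix.det_apply']
      rfl
    simp only [hF]
    rw [h1, h2, Finset.sum_mul_sum, Fintype.sum_prod_type]
    refine Finset.sum_congr rfl fun σ _ => Finset.sum_congr rfl fun τ _ => ?_
    rw [Finset.prod_mul_distrib]
    ring
  -- integrate term by term
  have hintterm : ∀ p : Equiv.Perm (Fin N) × Equiv.Perm (Fin N),
      Integrable (fun x : Fin N → X => ∏ n : Fin N, (φ (p.1 n) (x n) * ψ (p.2 n) (x n)))
        (Measure.pi fun _ => μ') := by
    intro p
    exact Integrable.fintype_prod (f := fun n x => φ (p.1 n) x * ψ (p.2 n) x)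
      fun n => hintA _ _
  have hsum : (∫ x, F x ∂(Measure.pi fun _ => μ')) =
      ∑ p : Equiv.Perm (Fin N) × Equiv.Perm (Fin N),
        (((Equiv.Perm.sign p.1 : ℤ) : ℝ) * ((Equiv.Perm.sign p.2 : ℤ) : ℝ)) *
          ∏ n : Fin N, A (p.1 n) (p.2 n) := by
    rw [show (fun x => F x) = fun x =>
      ∑ p : Equiv.Perm (Fin N) × Equiv.Perm (Fin N),
        (((Equiv.Perm.sign p.1 : ℤ) : ℝ) * ((Equiv.Perm.sign p.2 : ℤ) : ℝ)) *
          ∏ n : Fin N, (φ (p.1 n) (x n) * ψ (p.2 n) (x n)) from funext hFexp]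
    rw [integral_finset_sum _ fun p _ => ((hintterm p).const_mul _)]
    refine Finset.sum_congr rfl fun p _ => ?_
    rw [integral_const_mul]
    congr 1
    have := integral_fintype_prod_eq_prod (𝕜 := ℝ) (ι := Fin N)
      (f := fun n x => φ (p.1 n) x * ψ (p.2 n) x) (E := fun _ => X) (μ := fun _ => μ')
    exact this
  -- permutation algebra
  have halg : (∑ p : Equiv.Perm (Fin N) × Equiv.Perm (Fin N),
        (((Equiv.Perm.sign p.1 : ℤ) : ℝ) * ((Equiv.Perm.sign p.2 : ℤ) : ℝ)) *
          ∏ n : Fin N, A (p.1 n) (p.2 n))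
      = (Nat.factorial N : ℝ) * Matrix.det A := by
    rw [Fintype.sum_prod_type_right]
    have hinner : ∀ τ : Equiv.Perm (Fin N),
        (∑ σ : Equiv.Perm (Fin N),
          (((Equiv.Perm.sign σ : ℤ) : ℝ) * ((Equiv.Perm.sign τ : ℤ) : ℝ)) *
            ∏ n : Fin N, A (σ n) (τ n)) = Matrix.det A := by
      intro τ
      rw [← Equiv.sum_comp (Equiv.mulRight τ) (fun σ =>
        (((Equiv.Perm.sign σ : ℤ) : ℝ) * ((Equiv.Perm.sign τ : ℤ) : ℝ)) *
          ∏ n : Fin N, A (σ n) (τ n))]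
      rw [Matrix.det_apply']
      refine Finset.sum_congr rfl fun π _ => ?_
      have hsign : ((Equiv.Perm.sign (Equiv.mulRight τ π) : ℤ) : ℝ) *
          ((Equiv.Perm.sign τ : ℤ) : ℝ) = ((Equiv.Perm.sign π : ℤ) : ℝ) := by
        simp only [Equiv.coe_mulRight, Equiv.Perm.sign_mul]
        push_cast
        rcases Int.units_eq_one_or (Equiv.Perm.sign τ) with h | h <;> rw [h] <;> push_cast <;> ring
      rw [hsign]
      congr 1
      have : ∀ n : Fin N, ((Equiv.mulRight τ π) : Equiv.Perm (Fin N)) n = π (τ n) := by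
        intro n; rfl
      rw [show (∏ n : Fin N, A (((Equiv.mulRight τ π) : Equiv.Perm (Fin N)) n) (τ n))
        = ∏ n : Fin N, A (π (τ n)) (τ n) from Finset.prod_congr rfl fun n _ => by rw [this n]]
      exact Equiv.prod_comp τ fun m => A (π m) m
    rw [Finset.sum_congr rfl fun τ _ => hinner τ, Finset.sum_const, Finset.card_univ,
      Fintype.card_perm, Fintype.card_fin, nsmul_eq_mul]
  -- put it together
  have hLHS : Matrix.det (Matrix.of fun k l : Fin N => ∫ x, φ k x * ψ l x ∂μ)
      = Matrix.det A := by
    congr 1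
    ext k l
    exact hentry k l
  rw [hLHS, hmeasrepl]
  rw [show (∫ x : Fin N → X,
      Matrix.det (Matrix.of fun n k : Fin N => φ k (x n)) *
      Matrix.det (Matrix.of fun n k : Fin N => ψ k (x n)) ∂(Measure.pi fun _ => μ'))
    = ∫ x, F x ∂(Measure.pi fun _ => μ') from rfl]
  rw [hsum, halg]
  rw [← mul_assoc, inv_mul_cancel₀ (by exact_mod_cast Nat.factorial_ne_zero N), one_mul]
end

section
/- Let f ∈ L²(μ) and let φ_0,…,φ_{N-1} ∈ L²(μ) be orthonormal w.r.t. μ. For points x_1,…,x_N, let Φ_{φ_0,f}(x_{1:N}) denote the matrix Φ(x_{1:N}) with its first column replaced by (f(x_1),…,f(x_N))ᵀ. Then (1/N!) ∫_{X^N} det Φ_{φ_0,f}(x_{1:N}) · det Φ(x_{1:N}) dμ^{⊗N}(x) = ⟨f, φ_0⟩. -/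
open MeasureTheory Matrix BigOperators Equiv Finset Set

section EZAux

lemma ez_perm_sum (N : ℕ) (M : Matrix (Fin N) (Fin N) ℝ) :
    ∑ σ : Perm (Fin N), ∑ τ : Perm (Fin N),
      ((Equiv.Perm.sign σ : ℤ) : ℝ) * ((Equiv.Perm.sign τ : ℤ) : ℝ) *
        ∏ n, M (σ.symm n) (τ.symm n)
      = (N.factorial : ℝ) * M.det := by
  classical
  have hdet : ∑ ρ : Perm (Fin N), ((Equiv.Perm.sign ρ : ℤ) : ℝ) * ∏ i, M i (ρ i) = M.det := by
    rw [← det_transpose M, det_apply']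
    simp [transpose_apply]
  have inner : ∀ σ : Perm (Fin N),
      ∑ τ : Perm (Fin N), ((Equiv.Perm.sign σ : ℤ) : ℝ) * ((Equiv.Perm.sign τ : ℤ) : ℝ) *
        ∏ n, M (σ.symm n) (τ.symm n) = M.det := by
    intro σ
    have key : ∀ τ : Perm (Fin N),
        ((Equiv.Perm.sign σ : ℤ) : ℝ) * ((Equiv.Perm.sign τ : ℤ) : ℝ) *
          ∏ n, M (σ.symm n) (τ.symm n)
        = ((Equiv.Perm.sign (τ⁻¹ * σ) : ℤ) : ℝ) * ∏ i, M i ((τ⁻¹ * σ) i) := by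
      intro τ
      have hprod : ∏ n, M (σ.symm n) (τ.symm n) = ∏ i, M i ((τ⁻¹ * σ) i) := by
        rw [← Equiv.prod_comp σ (fun n => M (σ.symm n) (τ.symm n))]
        apply Finset.prod_congr rfl
        intro n _
        simp [Perm.mul_apply, Perm.inv_def]
      rw [hprod]
      congr 1
      simp [_root_.map_mul, map_inv, Int.units_inv_eq_self, Units.val_mul, Int.cast_mul,
        mul_comm]
    rw [Finset.sum_congr rfl fun τ _ => key τ]
    rw [← hdet]
    exact Equiv.sum_comp ((Equiv.inv (Perm (Fin N))).trans (Equiv.mulRight σ))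
      (fun ρ => ((Equiv.Perm.sign ρ : ℤ) : ℝ) * ∏ i, M i (ρ i))
  rw [Finset.sum_congr rfl fun σ _ => inner σ, Finset.sum_const]
  simp [Finset.card_univ, Fintype.card_perm, nsmul_eq_mul]

lemma ez_det_near_id (N : ℕ) (hN : 0 < N) (M : Matrix (Fin N) (Fin N) ℝ)
    (hk : ∀ k l, k ≠ ⟨0, hN⟩ → M k l = if k = l then 1 else 0) :
    M.det = M ⟨0, hN⟩ ⟨0, hN⟩ := by
  classical
  rw [det_apply']
  rw [Finset.sum_eq_single (1 : Perm (Fin N))]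
  · simp only [Equiv.Perm.sign_one, Perm.one_apply, Units.val_one, Int.cast_one, one_mul]
    rw [Finset.prod_eq_single ⟨0, hN⟩ (fun i _ hi => by rw [hk i i hi]; simp)
      (fun h => absurd (Finset.mem_univ _) h)]
  · intro ρ _ hρ
    by_contra hne
    have hne' : ∀ i, M (ρ i) i ≠ 0 := by
      intro i hi
      exact hne (by rw [show (∏ j, M (ρ j) j) = 0 from
        Finset.prod_eq_zero (Finset.mem_univ i) hi, mul_zero])
    have hcases : ∀ i, ρ i = ⟨0, hN⟩ ∨ ρ i = i := by
      intro i
      by_contra hc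
      push_neg at hc
      exact hne' i (by rw [hk _ _ hc.1, if_neg hc.2])
    have h0 : ρ ⟨0, hN⟩ = ⟨0, hN⟩ := by rcases hcases ⟨0, hN⟩ with h | h <;> exact h
    have : ρ = 1 := by
      ext i
      rcases hcases i with h | h
      · by_cases hi : i = ⟨0, hN⟩
        · simp [hi, h0]
        · exact absurd (ρ.injective (h.trans h0.symm)) hi
      · simp [h]
    exact hρ this
  · exact fun h => absurd (Finset.mem_univ _) h

lemma ez_andreief_expand {X : Type*} [MeasurableSpace X] (N : ℕ) (g ψ : Fin N → X → ℝ)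
    (x : Fin N → X) :
    Matrix.det (Matrix.of fun n k : Fin N => g k (x n)) *
      Matrix.det (Matrix.of fun n k : Fin N => ψ k (x n))
    = ∑ σ : Perm (Fin N), ∑ τ : Perm (Fin N),
        ((Equiv.Perm.sign σ : ℤ) : ℝ) * ((Equiv.Perm.sign τ : ℤ) : ℝ) *
          ∏ n, (g (σ.symm n) (x n) * ψ (τ.symm n) (x n)) := by
  classical
  rw [det_apply', det_apply', Finset.sum_mul_sum]
  refine Finset.sum_congr rfl fun σ _ => Finset.sum_congr rfl fun τ _ => ?_
  have h1 : ∏ i, (Matrix.of fun n k : Fin N => g k (x n)) (σ i) i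
      = ∏ n, g (σ.symm n) (x n) := by
    rw [← Equiv.prod_comp σ (fun n => g (σ.symm n) (x n))]
    simp
  have h2 : ∏ i, (Matrix.of fun n k : Fin N => ψ k (x n)) (τ i) i
      = ∏ n, ψ (τ.symm n) (x n) := by
    rw [← Equiv.prod_comp τ (fun n => ψ (τ.symm n) (x n))]
    simp
  rw [h1, h2, Finset.prod_mul_distrib]
  ring

lemma ez_integrable_mul {α : Type*} [MeasurableSpace α] {m : MeasureTheory.Measure α}
    {a b : α → ℝ} (ha : MemLp a 2 m) (hb : MemLp b 2 m) :
    Integrable (fun t => a t * b t) m := by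
  have hI := (((ha.add hb).integrable_sq.sub ha.integrable_sq).sub
    hb.integrable_sq).div_const 2
  refine hI.congr (Filter.Eventually.of_forall fun t => ?_)
  simp only [Pi.sub_apply, Pi.add_apply]
  ring

lemma ez_andreief {X : Type*} [MeasureSpace X] [SigmaFinite (volume : Measure X)]
    (N : ℕ) (g ψ : Fin N → X → ℝ)
    (hint : ∀ k l, Integrable (fun t => g k t * ψ l t)) :
    ∫ x : Fin N → X,
        Matrix.det (Matrix.of fun n k : Fin N => g k (x n)) *
        Matrix.det (Matrix.of fun n k : Fin N => ψ k (x n))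
      = (N.factorial : ℝ) *
        Matrix.det (Matrix.of fun k l : Fin N => ∫ t, g k t * ψ l t) := by
  classical
  have hFint : ∀ σ τ : Perm (Fin N), Integrable (fun x : Fin N → X =>
      ((Equiv.Perm.sign σ : ℤ) : ℝ) * ((Equiv.Perm.sign τ : ℤ) : ℝ) *
        ∏ n, (g (σ.symm n) (x n) * ψ (τ.symm n) (x n))) := by
    intro σ τ
    exact (Integrable.fintype_prod (f := fun n t => g (σ.symm n) t * ψ (τ.symm n) t)
      (fun n => hint _ _)).const_mul _
  calc
    ∫ x : Fin N → X,
        Matrix.det (Matrix.of fun n k : Fin N => g k (x n)) *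
        Matrix.det (Matrix.of fun n k : Fin N => ψ k (x n))
      = ∫ x : Fin N → X, ∑ σ : Perm (Fin N), ∑ τ : Perm (Fin N),
          ((Equiv.Perm.sign σ : ℤ) : ℝ) * ((Equiv.Perm.sign τ : ℤ) : ℝ) *
            ∏ n, (g (σ.symm n) (x n) * ψ (τ.symm n) (x n)) := by
        congr 1; ext x; exact ez_andreief_expand N g ψ x
    _ = ∑ σ : Perm (Fin N), ∑ τ : Perm (Fin N),
          ((Equiv.Perm.sign σ : ℤ) : ℝ) * ((Equiv.Perm.sign τ : ℤ) : ℝ) *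
            ∏ n, ∫ t, g (σ.symm n) t * ψ (τ.symm n) t := by
        rw [integral_finset_sum _ (fun σ _ => integrable_finset_sum _ (fun τ _ => hFint σ τ))]
        refine Finset.sum_congr rfl fun σ _ => ?_
        rw [integral_finset_sum _ (fun τ _ => hFint σ τ)]
        refine Finset.sum_congr rfl fun τ _ => ?_
        rw [integral_const_mul,
          integral_fintype_prod_volume_eq_prod (f := fun n t => g (σ.symm n) t * ψ (τ.symm n) t)]
    _ = (N.factorial : ℝ) *
        Matrix.det (Matrix.of fun k l : Fin N => ∫ t, g k t * ψ l t) := by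
        exact ez_perm_sum N (Matrix.of fun k l => ∫ t, g k t * ψ l t)

variable {X : Type*} [MeasurableSpace X] {N : ℕ}

/-- Without σ-finiteness: pi measure of a coordinate preimage of a null set is null. -/
lemma ez_pi_eval_null (μ : Measure X) (n : Fin N) {s : Set X} (hs : μ s = 0) :
    Measure.pi (fun _ : Fin N => μ) (Function.eval n ⁻¹' s) = 0 := by
  classical
  rcases exists_measurable_superset_of_null hs with ⟨t, hst, htm, hμt⟩
  refine measure_mono_null (Set.preimage_mono hst) (le_antisymm ?_ zero_le)
  have hmeas : MeasurableSet (Function.eval n ⁻¹' t : Set (Fin N → X)) :=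
    measurable_pi_apply n htm
  have hset : (Function.eval n ⁻¹' t : Set (Fin N → X))
      = Set.pi Set.univ (Function.update (fun _ : Fin N => (Set.univ : Set X)) n t) := by
    ext y
    simp [Function.update_apply]
  rw [Measure.pi_def, toMeasure_apply _ _ hmeas, hset]
  refine le_trans (OuterMeasure.pi_pi_le _ _) ?_
  refine le_of_eq (Finset.prod_eq_zero (Finset.mem_univ n) ?_)
  simp [Function.update_self, hμt]

/-- The pi measures of `μ` and `μ.restrict S` agree on measurable subsets of `S^N`. -/
lemma ez_pi_restrict_eq (μ : Measure X) {S : Set X} (hS : MeasurableSet S)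
    {A : Set (Fin N → X)} (hA : MeasurableSet A) (hAS : A ⊆ Set.pi Set.univ fun _ => S) :
    Measure.pi (fun _ : Fin N => μ) A = Measure.pi (fun _ : Fin N => μ.restrict S) A := by
  classical
  rw [Measure.pi_def, Measure.pi_def, toMeasure_apply _ _ hA, toMeasure_apply _ _ hA]
  refine le_antisymm ?_ ?_
  · rw [OuterMeasure.pi, OuterMeasure.boundedBy_apply]
    refine le_iInf fun t => le_iInf fun ht => ?_
    have hcover : A ⊆ ⋃ i, (t i ∩ Set.pi Set.univ fun _ => S) := by
      intro x hx
      rcases Set.mem_iUnion.1 (ht hx) with ⟨i, hi⟩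
      exact Set.mem_iUnion.2 ⟨i, hi, hAS hx⟩
    calc (OuterMeasure.pi fun _ : Fin N => μ.toOuterMeasure) A
        ≤ ∑' i, ⨆ _ : (t i ∩ Set.pi Set.univ fun _ => S).Nonempty,
            piPremeasure (fun _ : Fin N => μ.toOuterMeasure)
              (t i ∩ Set.pi Set.univ fun _ => S) := by
          rw [OuterMeasure.pi, OuterMeasure.boundedBy_apply]
          exact iInf₂_le (fun i => t i ∩ Set.pi Set.univ fun _ => S) hcover
      _ ≤ ∑' i, ⨆ _ : (t i).Nonempty,
            piPremeasure (fun _ : Fin N => (μ.restrict S).toOuterMeasure) (t i) := by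
          refine ENNReal.tsum_le_tsum fun i => ?_
          refine iSup_le fun hne => ?_
          refine le_iSup_of_le (hne.mono Set.inter_subset_left) ?_
          refine Finset.prod_le_prod' fun j _ => ?_
          have himg : Function.eval j '' (t i ∩ Set.pi Set.univ fun _ => S)
              ⊆ (Function.eval j '' t i) ∩ S := by
            rintro y ⟨x, ⟨hxt, hxS⟩, rfl⟩
            exact ⟨⟨x, hxt, rfl⟩, hxS j trivial⟩
          calc μ.toOuterMeasure (Function.eval j '' (t i ∩ Set.pi Set.univ fun _ => S))
              ≤ μ ((Function.eval j '' t i) ∩ S) := measure_mono himg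
            _ = (μ.restrict S).toOuterMeasure (Function.eval j '' t i) := by
                rw [Measure.toOuterMeasure_apply, Measure.restrict_apply' hS]
  · rw [OuterMeasure.pi, OuterMeasure.pi, OuterMeasure.boundedBy_apply,
      OuterMeasure.boundedBy_apply]
    refine iInf_mono fun t => iInf_mono' fun ht => ⟨ht, ENNReal.tsum_le_tsum fun i => ?_⟩
    refine iSup_mono fun hne => ?_
    refine Finset.prod_le_prod' fun j _ => ?_
    simp only [Measure.toOuterMeasure_apply, Measure.restrict_apply' hS]
    exact measure_mono Set.inter_subset_left

/-- Transfer of integrals of functions vanishing off `S^N`. -/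
lemma ez_integral_pi_restrict (μ : Measure X) {S : Set X} (hS : MeasurableSet S)
    (F : (Fin N → X) → ℝ) (hF : ∀ x, x ∉ (Set.pi Set.univ fun _ : Fin N => S) → F x = 0) :
    ∫ x, F x ∂(Measure.pi fun _ : Fin N => μ)
      = ∫ x, F x ∂(Measure.pi fun _ : Fin N => μ.restrict S) := by
  classical
  have hSN : MeasurableSet (Set.pi Set.univ fun _ : Fin N => S) :=
    MeasurableSet.univ_pi fun _ => hS
  have hrestr : (Measure.pi fun _ : Fin N => μ).restrict (Set.pi Set.univ fun _ => S)
      = (Measure.pi fun _ : Fin N => μ.restrict S).restrict (Set.pi Set.univ fun _ => S) := by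
    ext A hA
    rw [Measure.restrict_apply hA, Measure.restrict_apply hA]
    exact ez_pi_restrict_eq μ hS (hA.inter hSN) Set.inter_subset_right
  rw [← setIntegral_eq_integral_of_forall_compl_eq_zero
      (μ := Measure.pi fun _ : Fin N => μ) hF,
    ← setIntegral_eq_integral_of_forall_compl_eq_zero
      (μ := Measure.pi fun _ : Fin N => μ.restrict S) hF,
    hrestr]

end EZAux

/-- Unbiasedness of the first EZ coordinate: the cross integral of the column-replaced
determinant with the feature determinant equals `⟨f, φ₀⟩`. -/
theorem ez_first_moment
    {X : Type*} [MeasurableSpace X] (μ : Measure X) (N : ℕ) (hN : 0 < N)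
    (φ : Fin N → X → ℝ) (f : X → ℝ)
    (hf : MemLp f 2 μ) (hφ : ∀ k, MemLp (φ k) 2 μ)
    (horth : ∀ k l, ∫ x, φ k x * φ l x ∂μ = if k = l then (1 : ℝ) else 0) :
    (Nat.factorial N : ℝ)⁻¹ *
      ∫ x : Fin N → X,
        Matrix.det (Matrix.updateCol (Matrix.of fun n k : Fin N => φ k (x n))
            ⟨0, hN⟩ (fun n => f (x n))) *
        Matrix.det (Matrix.of fun n k : Fin N => φ k (x n))
        ∂(Measure.pi fun _ => μ)
      = ∫ t, f t * φ ⟨0, hN⟩ t ∂μ := by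
  classical
  set k0 : Fin N := ⟨0, hN⟩ with hk0
  -- measurable representatives
  set f₁ : X → ℝ := hf.1.mk f with hf₁def
  have hf₁m : StronglyMeasurable f₁ := hf.1.stronglyMeasurable_mk
  have hff₁ : f =ᵐ[μ] f₁ := hf.1.ae_eq_mk
  set φ₁ : Fin N → X → ℝ := fun k => (hφ k).1.mk (φ k) with hφ₁def
  have hφ₁m : ∀ k, StronglyMeasurable (φ₁ k) := fun k => (hφ k).1.stronglyMeasurable_mk
  have hφφ₁ : ∀ k, φ k =ᵐ[μ] φ₁ k := fun k => (hφ k).1.ae_eq_mk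
  have hf₁L : MemLp f₁ 2 μ := hf.ae_eq hff₁
  have hφ₁L : ∀ k, MemLp (φ₁ k) 2 μ := fun k => (hφ k).ae_eq (hφφ₁ k)
  -- the support set S
  set S : Set X := {t | f₁ t ≠ 0} ∪ ⋃ k, {t | φ₁ k t ≠ 0} with hSdef
  have hSmeas : MeasurableSet S := by
    refine MeasurableSet.union ?_ (MeasurableSet.iUnion fun k => ?_)
    · exact hf₁m.measurable (measurableSet_singleton (0 : ℝ)).compl
    · exact (hφ₁m k).measurable (measurableSet_singleton (0 : ℝ)).compl
  have hf₁S : ∀ t, t ∉ S → f₁ t = 0 := by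
    intro t ht; by_contra hc; exact ht (Or.inl hc)
  have hφ₁S : ∀ k t, t ∉ S → φ₁ k t = 0 := by
    intro k t ht; by_contra hc; exact ht (Or.inr (Set.mem_iUnion.2 ⟨k, hc⟩))
  -- σ-finiteness of the restriction
  set h : X → ℝ := fun t => f₁ t ^ 2 + ∑ k, φ₁ k t ^ 2 with hhdef
  have hh : Integrable h μ :=
    (hf₁L.integrable_sq).add (integrable_finset_sum _ fun k _ => (hφ₁L k).integrable_sq)
  have hhpos : ∀ t ∈ S, 0 < h t := by
    intro t ht
    rcases ht with ht | ht
    · have h1 : 0 < f₁ t ^ 2 := sq_pos_of_ne_zero ht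
      exact lt_of_lt_of_le h1
        (le_add_of_nonneg_right (Finset.sum_nonneg fun k _ => sq_nonneg _))
    · rcases Set.mem_iUnion.1 ht with ⟨k, hk⟩
      have h1 : 0 < φ₁ k t ^ 2 := sq_pos_of_ne_zero hk
      have h2 : φ₁ k t ^ 2 ≤ ∑ j, φ₁ j t ^ 2 :=
        Finset.single_le_sum (f := fun j => φ₁ j t ^ 2) (fun j _ => sq_nonneg _) (Finset.mem_univ k)
      exact lt_of_lt_of_le (lt_of_lt_of_le h1 h2) (le_add_of_nonneg_left (sq_nonneg _))
  haveI hSF : SigmaFinite (μ.restrict S) := by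
    refine ⟨⟨⟨fun n => {t | 1 / (n + 1 : ℝ) ≤ h t} ∪ Sᶜ, fun n => trivial, fun n => ?_, ?_⟩⟩⟩
    · rw [Measure.restrict_apply' hSmeas]
      refine lt_of_le_of_lt (measure_mono ?_) (hh.measure_ge_lt_top (ε := 1 / (n + 1 : ℝ)) (by positivity))
      rintro t ⟨ht, htS⟩
      rcases ht with ht | ht
      · exact ht
      · exact absurd htS ht
    · apply Set.eq_univ_of_forall
      intro t
      by_cases htS : t ∈ S
      · rcases exists_nat_one_div_lt (hhpos t htS) with ⟨n, hn⟩
        exact Set.mem_iUnion.2 ⟨n, Or.inl (le_of_lt hn)⟩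
      · exact Set.mem_iUnion.2 ⟨0, Or.inr htS⟩
  set ν : Measure X := μ.restrict S with hνdef
  set g₁ : Fin N → X → ℝ := Function.update φ₁ k0 f₁ with hg₁def
  -- inner-product transfer
  have htransfer : ∀ a b a' b' : X → ℝ, (∀ t, t ∉ S → a t = 0) →
      a' =ᵐ[μ] a → b' =ᵐ[μ] b → ∫ t, a t * b t ∂ν = ∫ t, a' t * b' t ∂μ := by
    intro a b a' b' haS ha hb
    have h1 : ∫ t, a t * b t ∂ν = ∫ t, a t * b t ∂μ :=
      setIntegral_eq_integral_of_forall_compl_eq_zero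
        (fun t ht => by rw [haS t ht, zero_mul])
    rw [h1]
    exact integral_congr_ae ((ha.mul hb).symm)
  have hMk : ∀ k l, k ≠ k0 → (∫ t, g₁ k t * φ₁ l t ∂ν) = if k = l then (1 : ℝ) else 0 := by
    intro k l hkk
    have hgk : g₁ k = φ₁ k := Function.update_of_ne hkk _ _
    rw [hgk, htransfer (φ₁ k) (φ₁ l) (φ k) (φ l) (hφ₁S k) (hφφ₁ k) (hφφ₁ l), horth k l]
  have hM0 : (∫ t, g₁ k0 t * φ₁ k0 t ∂ν) = ∫ t, f t * φ k0 t ∂μ := by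
    have hgk : g₁ k0 = f₁ := Function.update_self _ _ _
    rw [hgk, htransfer f₁ (φ₁ k0) f (φ k0) hf₁S hff₁ (hφφ₁ k0)]
  -- integrability for Andreief
  have hf₁ν : MemLp f₁ 2 ν := hf₁L.restrict S
  have hφ₁ν : ∀ k, MemLp (φ₁ k) 2 ν := fun k => (hφ₁L k).restrict S
  have hg₁ν : ∀ k, MemLp (g₁ k) 2 ν := by
    intro k
    by_cases hkk : k = k0
    · rw [hkk, show g₁ k0 = f₁ from Function.update_self _ _ _]; exact hf₁ν
    · rw [show g₁ k = φ₁ k from Function.update_of_ne hkk _ _]; exact hφ₁ν k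
  have hint : ∀ k l, Integrable (fun t => g₁ k t * φ₁ l t) ν := fun k l =>
    ez_integrable_mul (hg₁ν k) (hφ₁ν l)
  -- step 1: replace by measurable representatives, a.e.
  have hbad : μ ({t | ¬ f t = f₁ t} ∪ ⋃ k, {t | ¬ φ k t = φ₁ k t}) = 0 :=
    measure_union_null (ae_iff.1 hff₁) (measure_iUnion_null fun k => ae_iff.1 (hφφ₁ k))
  have hpibad : Measure.pi (fun _ : Fin N => μ)
      (⋃ n, Function.eval n ⁻¹' ({t | ¬ f t = f₁ t} ∪ ⋃ k, {t | ¬ φ k t = φ₁ k t})) = 0 :=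
    measure_iUnion_null fun n => ez_pi_eval_null μ n hbad
  have step1 : (∫ x : Fin N → X,
        Matrix.det ((Matrix.of fun n k : Fin N => φ k (x n)).updateCol
            k0 (fun n => f (x n))) *
        Matrix.det (Matrix.of fun n k : Fin N => φ k (x n)) ∂(Measure.pi fun _ => μ))
      = ∫ x : Fin N → X,
        Matrix.det (Matrix.of fun n k : Fin N => g₁ k (x n)) *
        Matrix.det (Matrix.of fun n k : Fin N => φ₁ k (x n)) ∂(Measure.pi fun _ => μ) := by
    have hsub : {x : Fin N → X | ¬ (Matrix.det ((Matrix.of fun n k : Fin N => φ k (x n)).updateCol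
            k0 (fun n => f (x n))) *
          Matrix.det (Matrix.of fun n k : Fin N => φ k (x n))
        = Matrix.det (Matrix.of fun n k : Fin N => g₁ k (x n)) *
          Matrix.det (Matrix.of fun n k : Fin N => φ₁ k (x n)))}
        ⊆ ⋃ n, Function.eval n ⁻¹' ({t | ¬ f t = f₁ t} ∪ ⋃ k, {t | ¬ φ k t = φ₁ k t}) := by
      intro x hx
      by_contra hxmem
      refine hx ?_
      have hcoord : ∀ n : Fin N, f (x n) = f₁ (x n) ∧ ∀ k, φ k (x n) = φ₁ k (x n) := by
        intro n
        have hn : x n ∉ ({t | ¬ f t = f₁ t} ∪ ⋃ k, {t | ¬ φ k t = φ₁ k t}) := by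
          intro hmem
          exact hxmem (Set.mem_iUnion.2 ⟨n, hmem⟩)
        constructor
        · by_contra hc; exact hn (Or.inl hc)
        · intro k; by_contra hc; exact hn (Or.inr (Set.mem_iUnion.2 ⟨k, hc⟩))
      have h2 : (Matrix.of fun n k : Fin N => φ k (x n))
          = Matrix.of fun n k : Fin N => φ₁ k (x n) := by
        ext n k; exact (hcoord n).2 k
      have h1 : (Matrix.of fun n k : Fin N => φ k (x n)).updateCol k0 (fun n => f (x n))
          = Matrix.of fun n k : Fin N => g₁ k (x n) := by
        ext n k
        rw [Matrix.updateCol_apply]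
        by_cases hkk : k = k0
        · rw [if_pos hkk, hkk]
          have : g₁ k0 = f₁ := Function.update_self _ _ _
          rw [Matrix.of_apply, this]
          exact (hcoord n).1
        · rw [if_neg hkk]
          have : g₁ k = φ₁ k := Function.update_of_ne hkk _ _
          rw [Matrix.of_apply, Matrix.of_apply, this]
          exact (hcoord n).2 k
      rw [h1, h2]
    exact integral_congr_ae (ae_iff.2 (measure_mono_null hsub hpibad))
  -- step 2: pass to the restricted measure
  have hvanish : ∀ x : Fin N → X, x ∉ (Set.pi Set.univ fun _ : Fin N => S) →
      Matrix.det (Matrix.of fun n k : Fin N => g₁ k (x n)) *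
      Matrix.det (Matrix.of fun n k : Fin N => φ₁ k (x n)) = 0 := by
    intro x hx
    have hex : ∃ n, x n ∉ S := by
      by_contra hc; push_neg at hc; exact hx fun n _ => hc n
    rcases hex with ⟨n, hn⟩
    rw [Matrix.det_eq_zero_of_row_eq_zero (A := Matrix.of fun n k : Fin N => φ₁ k (x n)) n
      (fun k => hφ₁S k (x n) hn), mul_zero]
  have step2 : (∫ x : Fin N → X,
        Matrix.det (Matrix.of fun n k : Fin N => g₁ k (x n)) *
        Matrix.det (Matrix.of fun n k : Fin N => φ₁ k (x n)) ∂(Measure.pi fun _ => μ))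
      = ∫ x : Fin N → X,
        Matrix.det (Matrix.of fun n k : Fin N => g₁ k (x n)) *
        Matrix.det (Matrix.of fun n k : Fin N => φ₁ k (x n))
        ∂(Measure.pi fun _ => μ.restrict S) :=
    ez_integral_pi_restrict μ hSmeas
      (fun x => Matrix.det (Matrix.of fun n k : Fin N => g₁ k (x n)) *
        Matrix.det (Matrix.of fun n k : Fin N => φ₁ k (x n))) hvanish
  -- step 3: Andreief identity for the σ-finite restricted measure
  letI : MeasureSpace X := ⟨ν⟩
  haveI : SigmaFinite (volume : Measure X) := hSF
  have step3 : (∫ x : Fin N → X,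
        Matrix.det (Matrix.of fun n k : Fin N => g₁ k (x n)) *
        Matrix.det (Matrix.of fun n k : Fin N => φ₁ k (x n)) ∂(Measure.pi fun _ => ν))
      = (N.factorial : ℝ) *
        Matrix.det (Matrix.of fun k l : Fin N => ∫ t, g₁ k t * φ₁ l t ∂ν) :=
    ez_andreief N g₁ φ₁ hint
  -- step 4: evaluate the Gram determinant
  have hdet : Matrix.det (Matrix.of fun k l : Fin N => ∫ t, g₁ k t * φ₁ l t ∂ν)
      = ∫ t, f t * φ k0 t ∂μ := by
    have hni := ez_det_near_id N hN (Matrix.of fun k l => ∫ t, g₁ k t * φ₁ l t ∂ν)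
      (fun k l hkk => hMk k l hkk)
    rw [hni]
    exact hM0
  rw [step1, step2, step3, hdet,
    inv_mul_cancel_left₀ (Nat.cast_ne_zero.mpr (Nat.factorial_ne_zero N))]
end

section
/- Let f ∈ L²(μ) and let φ_0,…,φ_{N-1} ∈ L²(μ) be orthonormal w.r.t. μ. Then (1/N!) ∫_{X^N} (det Φ_{φ_0,f}(x_{1:N}))² dμ^{⊗N}(x) = ‖f‖² − Σ_{k=1}^{N-1} ⟨f, φ_k⟩². -/
open MeasureTheory Matrix BigOperators Set


lemma det_aux {n : ℕ} (G : Matrix (Fin (n+1)) (Fin (n+1)) ℝ)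
    (h : ∀ k l : Fin (n+1), k ≠ 0 → l ≠ 0 → G k l = if k = l then 1 else 0) :
    G.det = G 0 0 - ∑ k ∈ Finset.univ.erase 0, G 0 k * G k 0 := by
  classical
  set d : ℝ := G 0 0 - ∑ k ∈ Finset.univ.erase 0, G 0 k * G k 0 with hd
  set w : Fin (n+1) → ℝ := fun k => if k = 0 then 1 else -(G 0 k) with hw
  have hrow : (∑ k, w k • G k) = fun l => if l = 0 then d else 0 := by
    funext l
    have hsum : (∑ k, w k • G k) l = ∑ k, w k * G k l := by
      simp [Finset.sum_apply]
    rw [hsum, ← Finset.add_sum_erase _ _ (Finset.mem_univ 0)]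
    by_cases hl : l = 0
    · subst hl
      simp only [hw, if_pos rfl, one_mul, if_pos]
      have : ∑ k ∈ Finset.univ.erase 0, (if k = (0:Fin (n+1)) then (1:ℝ) else -(G 0 k)) * G k 0
          = ∑ k ∈ Finset.univ.erase 0, -(G 0 k * G k 0) := by
        refine Finset.sum_congr rfl fun k hk => ?_
        rw [if_neg (Finset.mem_erase.1 hk).1, neg_mul]
      rw [this]
      simp only [Finset.sum_neg_distrib]
      simp [hd]
      ring
    · rw [if_neg hl]
      have h2 : ∑ k ∈ Finset.univ.erase 0, w k * G k l = G 0 l * -1 := by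
        rw [Finset.sum_eq_single_of_mem l (Finset.mem_erase.2 ⟨hl, Finset.mem_univ l⟩)]
        · rw [hw]
          simp only [if_neg hl, h l l hl hl, eq_self_iff_true, if_true]
          ring
        · intro k hk hkl
          rw [h k l (Finset.mem_erase.1 hk).1 hl, if_neg hkl, mul_zero]
      rw [h2, hw]
      simp only [eq_self_iff_true, if_true]
      ring
  have h1 : (G.updateRow 0 (∑ k, w k • G k)).det = G.det := by
    rw [Matrix.det_updateRow_sum G 0 w]
    simp [hw]
  rw [hrow] at h1
  rw [← h1, Matrix.det_succ_row_zero]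
  rw [Finset.sum_eq_single 0]
  · simp only [Matrix.updateRow_self, if_pos rfl]
    have hsub : ((G.updateRow 0 fun l => if l = 0 then d else 0).submatrix Fin.succ
        ((0 : Fin (n+1)).succAbove)) = 1 := by
      funext i j
      simp only [Matrix.submatrix_apply, Fin.succAbove_zero]
      rw [Matrix.updateRow_ne (Fin.succ_ne_zero i)]
      rw [h _ _ (Fin.succ_ne_zero i) (Fin.succ_ne_zero j)]
      by_cases hij : i = j
      · subst hij; simp
      · rw [if_neg (by simpa using hij), Matrix.one_apply_ne hij]
    rw [hsub, Matrix.det_one]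
    simp
  · intro j _ hj
    rw [Matrix.updateRow_self]
    simp [if_neg hj]
  · simp


lemma pi_le_prod {X : Type*} [MeasurableSpace X] (μ : Measure X) {N : ℕ}
    (s : Fin N → Set X) (hs : ∀ i, MeasurableSet (s i)) :
    Measure.pi (fun _ : Fin N => μ) (Set.pi Set.univ s) ≤ ∏ i, μ (s i) := by
  rw [Measure.pi_def, toMeasure_apply _ _
    (MeasurableSet.pi Set.countable_univ fun i _ => hs i)]
  exact OuterMeasure.pi_pi_le _ s

lemma cylinder_null {X : Type*} [MeasurableSpace X] (μ : Measure X) {N : ℕ}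
    (n : Fin N) {B : Set X} (hB : μ B = 0) :
    Measure.pi (fun _ : Fin N => μ) (Function.eval n ⁻¹' B) = 0 := by
  classical
  obtain ⟨t, hBt, htm, ht0⟩ := exists_measurable_superset_of_null hB
  refine measure_mono_null (Set.preimage_mono hBt) ?_
  have hrw : Function.eval n ⁻¹' t
      = Set.pi Set.univ (Function.update (fun _ : Fin N => (Set.univ : Set X)) n t) :=
    by
      ext x
      simp only [Set.mem_preimage, Set.mem_pi, Set.mem_univ, forall_true_left,
        Function.update_apply, Function.eval]
      constructor
      · intro hx i
        split <;> simp_all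
      · intro hx
        simpa using hx n
  rw [hrw]
  refine le_antisymm (le_trans (pi_le_prod μ _ fun i => ?_) ?_) zero_le
  · rcases eq_or_ne i n with rfl | h
    · simpa using htm
    · simp [Function.update_apply, if_neg h]
  · rw [Finset.prod_eq_zero (Finset.mem_univ n) (by simp [ht0])]

lemma pi_mono_le {X : Type*} [MeasurableSpace X] (μ ν : Measure X) (hle : ν ≤ μ) {N : ℕ} :
    Measure.pi (fun _ : Fin N => ν) ≤ Measure.pi (fun _ : Fin N => μ) := by
  rw [Measure.le_iff]
  intro A hA
  rw [Measure.pi_def, Measure.pi_def, toMeasure_apply _ _ hA,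
    toMeasure_apply _ _ hA]
  revert A hA
  have : (OuterMeasure.pi fun _ : Fin N => ν.toOuterMeasure)
      ≤ OuterMeasure.pi fun _ : Fin N => μ.toOuterMeasure := by
    rw [OuterMeasure.le_pi]
    intro s _
    refine (OuterMeasure.pi_pi_le _ s).trans (Finset.prod_le_prod' fun i _ => ?_)
    exact Measure.le_iff'.1 hle (s i)
  exact fun A _ => this A

lemma pi_restrict_eq {X : Type*} [MeasurableSpace X] (μ : Measure X) {N : ℕ}
    {T : Set X} (hT : MeasurableSet T) [SigmaFinite (μ.restrict T)] :
    Measure.pi (fun _ : Fin N => μ.restrict T)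
      = (Measure.pi fun _ : Fin N => μ).restrict (Set.pi Set.univ fun _ => T) := by
  refine Measure.pi_eq fun s hs => ?_
  rw [Measure.restrict_apply (MeasurableSet.pi Set.countable_univ fun i _ => hs i)]
  have hinter : Set.pi univ s ∩ Set.pi univ (fun _ => T)
      = Set.pi univ (fun i => s i ∩ T) := by
    rw [Set.pi_inter_distrib]
  rw [hinter]
  refine le_antisymm ?_ ?_
  · refine (pi_le_prod μ _ fun i => (hs i).inter hT).trans (le_of_eq ?_)
    refine Finset.prod_congr rfl fun i _ => ?_
    rw [Measure.restrict_apply (hs i)]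
  · calc ∏ i, (μ.restrict T) (s i)
        = ∏ i, (μ.restrict T) (s i ∩ T) := by
          refine Finset.prod_congr rfl fun i _ => ?_
          rw [Measure.restrict_apply (hs i), Measure.restrict_apply ((hs i).inter hT),
            Set.inter_assoc, Set.inter_self]
      _ = Measure.pi (fun _ : Fin N => μ.restrict T) (Set.pi univ fun i => s i ∩ T) := by
          rw [Measure.pi_pi]
      _ ≤ _ := Measure.le_iff'.1 (pi_mono_le μ (μ.restrict T) Measure.restrict_le_self) _


lemma mul_integrable {X : Type*} [MeasurableSpace X] {μ : Measure X} {a b : X → ℝ}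
    (ha : MemLp a 2 μ) (hb : MemLp b 2 μ) : Integrable (fun t => a t * b t) μ := by
  have h := hb.smul (φ := a) (p := 2) (q := 2) (r := 1) ha (hpqr := ?_)
  · rw [← memLp_one_iff_integrable]
    exact h
  · exact ⟨by rw [inv_one, ← two_mul, ENNReal.mul_inv_cancel two_ne_zero ENNReal.ofNat_ne_top]⟩

lemma key_fubini {X : Type*} [MeasurableSpace X] (μ : Measure X) [SigmaFinite μ] {N : ℕ}
    (ψ : Fin N → X → ℝ) (hψ : ∀ k, MemLp (ψ k) 2 μ) :
    ∫ x : Fin N → X, (Matrix.det (Matrix.of fun n k : Fin N => ψ k (x n))) ^ 2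
        ∂(Measure.pi fun _ => μ)
      = (Nat.factorial N : ℝ)
        * Matrix.det (Matrix.of fun k l : Fin N => ∫ t, ψ k t * ψ l t ∂μ) := by
  classical
  letI : MeasureSpace X := ⟨μ⟩
  set G : Matrix (Fin N) (Fin N) ℝ := Matrix.of fun k l : Fin N => ∫ t, ψ k t * ψ l t ∂μ
    with hG
  have hdet : ∀ x : Fin N → X,
      Matrix.det (Matrix.of fun n k : Fin N => ψ k (x n))
        = ∑ σ : Equiv.Perm (Fin N), ((Equiv.Perm.sign σ : ℤ) : ℝ) * ∏ n, ψ (σ n) (x n) := by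
    intro x
    rw [← Matrix.det_transpose, Matrix.det_apply']
    rfl
  have hsq : ∀ x : Fin N → X,
      (Matrix.det (Matrix.of fun n k : Fin N => ψ k (x n))) ^ 2
        = ∑ p : Equiv.Perm (Fin N) × Equiv.Perm (Fin N),
            (((Equiv.Perm.sign p.1 : ℤ) : ℝ) * ((Equiv.Perm.sign p.2 : ℤ) : ℝ))
              * ∏ n, (ψ (p.1 n) (x n) * ψ (p.2 n) (x n)) := by
    intro x
    rw [hdet, sq, Finset.sum_mul_sum, ← Finset.sum_product']
    rw [← Finset.univ_product_univ]
    refine Finset.sum_congr rfl fun p _ => ?_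
    rw [Finset.prod_mul_distrib]
    ring
  simp_rw [hsq]
  have hint : ∀ p : Equiv.Perm (Fin N) × Equiv.Perm (Fin N),
      Integrable (fun x : Fin N → X =>
        (((Equiv.Perm.sign p.1 : ℤ) : ℝ) * ((Equiv.Perm.sign p.2 : ℤ) : ℝ))
          * ∏ n, (ψ (p.1 n) (x n) * ψ (p.2 n) (x n))) (Measure.pi fun _ => μ) := by
    intro p
    refine Integrable.const_mul ?_ _
    exact Integrable.fintype_prod (f := fun n t => ψ (p.1 n) t * ψ (p.2 n) t)
      fun n => mul_integrable (hψ _) (hψ _)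
  rw [integral_finset_sum _ fun p _ => hint p]
  have hterm : ∀ p : Equiv.Perm (Fin N) × Equiv.Perm (Fin N),
      ∫ x : Fin N → X,
          (((Equiv.Perm.sign p.1 : ℤ) : ℝ) * ((Equiv.Perm.sign p.2 : ℤ) : ℝ))
            * ∏ n, (ψ (p.1 n) (x n) * ψ (p.2 n) (x n)) ∂(Measure.pi fun _ => μ)
        = (((Equiv.Perm.sign p.1 : ℤ) : ℝ) * ((Equiv.Perm.sign p.2 : ℤ) : ℝ))
            * ∏ n, G (p.1 n) (p.2 n) := by
    intro p
    rw [integral_const_mul _ _]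
    congr 1
    exact integral_fintype_prod_eq_prod (fun n t => ψ (p.1 n) t * ψ (p.2 n) t)
  simp_rw [hterm]
  rw [← Finset.univ_product_univ, Finset.sum_product_right]
  have hinner : ∀ τ : Equiv.Perm (Fin N),
      ∑ σ : Equiv.Perm (Fin N),
          (((Equiv.Perm.sign σ : ℤ) : ℝ) * ((Equiv.Perm.sign τ : ℤ) : ℝ))
            * ∏ n, G (σ n) (τ n) = G.det := by
    intro τ
    have h1 : ∑ σ : Equiv.Perm (Fin N),
        ((Equiv.Perm.sign σ : ℤ) : ℝ) * ∏ n, (G.submatrix id τ) (σ n) n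
        = (G.submatrix id τ).det := (Matrix.det_apply' _).symm
    have h2 : (G.submatrix id τ).det = ((Equiv.Perm.sign τ : ℤ) : ℝ) * G.det := by
      rw [Matrix.det_permute' τ G]
    calc ∑ σ : Equiv.Perm (Fin N),
          (((Equiv.Perm.sign σ : ℤ) : ℝ) * ((Equiv.Perm.sign τ : ℤ) : ℝ))
            * ∏ n, G (σ n) (τ n)
        = ((Equiv.Perm.sign τ : ℤ) : ℝ) * ∑ σ : Equiv.Perm (Fin N),
            ((Equiv.Perm.sign σ : ℤ) : ℝ) * ∏ n, (G.submatrix id τ) (σ n) n := by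
          rw [Finset.mul_sum]
          refine Finset.sum_congr rfl fun σ _ => ?_
          simp only [Matrix.submatrix_apply, id_eq]
          ring
      _ = ((Equiv.Perm.sign τ : ℤ) : ℝ) * (((Equiv.Perm.sign τ : ℤ) : ℝ) * G.det) := by
          rw [h1, h2]
      _ = G.det := by
          rw [← mul_assoc, ← Int.cast_mul]
          have : (Equiv.Perm.sign τ : ℤ) * (Equiv.Perm.sign τ : ℤ) = 1 := by
            rcases Int.units_eq_one_or (Equiv.Perm.sign τ) with h | h <;> simp [h]
          rw [this]
          simp
  simp_rw [hinner]
  rw [Finset.sum_const, Finset.card_univ, Fintype.card_perm, Fintype.card_fin, nsmul_eq_mul]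

/-- Second moment of the first EZ coordinate. -/
theorem ez_second_moment
    {X : Type*} [MeasurableSpace X] (μ : Measure X) (N : ℕ) (hN : 0 < N)
    (φ : Fin N → X → ℝ) (f : X → ℝ)
    (hf : MemLp f 2 μ) (hφ : ∀ k, MemLp (φ k) 2 μ)
    (horth : ∀ k l, ∫ x, φ k x * φ l x ∂μ = if k = l then (1 : ℝ) else 0) :
    (Nat.factorial N : ℝ)⁻¹ *
      ∫ x : Fin N → X,
        (Matrix.det ((Matrix.of fun n k : Fin N => φ k (x n)).updateCol
            ⟨0, hN⟩ (fun n => f (x n)))) ^ 2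
        ∂(Measure.pi fun _ => μ)
      = (∫ t, f t ^ 2 ∂μ)
        - ∑ k ∈ Finset.univ.filter (fun k : Fin N => k ≠ ⟨0, hN⟩),
            (∫ t, f t * φ k t ∂μ) ^ 2 := by
  classical
  obtain ⟨n, rfl⟩ : ∃ n, N = n + 1 := ⟨N - 1, (Nat.succ_pred_eq_of_pos hN).symm⟩
  have hz0 : (⟨0, hN⟩ : Fin (n+1)) = 0 := Fin.ext (by simp)
  rw [hz0]
  set ψ : Fin (n+1) → X → ℝ := fun k => if k = 0 then f else φ k with hψdef
  have hψℒ : ∀ k, MemLp (ψ k) 2 μ := by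
    intro k
    by_cases h : k = 0
    · simpa [hψdef, h] using hf
    · simpa [hψdef, h] using hφ k
  have hmat : ∀ x : Fin (n+1) → X,
      (Matrix.of fun m k : Fin (n+1) => φ k (x m)).updateCol 0 (fun m => f (x m))
        = Matrix.of (fun m k : Fin (n+1) => ψ k (x m)) := by
    intro x
    ext m k
    rw [Matrix.updateCol_apply]
    by_cases h : k = 0 <;> simp [hψdef, h]
  simp_rw [hmat]
  -- measurable representatives with sigma-finite supports
  have hfin : ∀ k, ∃ g : X → ℝ, ∃ t : Set X, (ψ k) =ᵐ[μ] g ∧ MeasurableSet t ∧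
      (∀ x ∈ tᶜ, g x = 0) ∧ SigmaFinite (μ.restrict t) := by
    intro k
    obtain ⟨gk, hgk, haek⟩ := (hψℒ k).aefinStronglyMeasurable two_ne_zero ENNReal.ofNat_ne_top
    obtain ⟨t, htm, hzero, hsft⟩ := hgk.exists_set_sigmaFinite
    exact ⟨gk, t, haek, htm, hzero, hsft⟩
  choose g t hae htm hzero hsf using hfin
  set T : Set X := ⋃ k, t k with hTdef
  have hTm : MeasurableSet T := MeasurableSet.iUnion htm
  haveI hTsf : SigmaFinite (μ.restrict T) := by
    haveI : ∀ k, SigmaFinite (μ.restrict (t k)) := hsf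
    exact Measure.sigmaFinite_of_le (Measure.sum fun k => μ.restrict (t k)) Measure.restrict_iUnion_le
  -- Step A: switch to representatives a.e.
  have haeall : ∀ᵐ x ∂(Measure.pi fun _ : Fin (n+1) => μ),
      ∀ m k : Fin (n+1), ψ k (x m) = g k (x m) := by
    rw [ae_all_iff]
    intro m
    rw [ae_all_iff]
    intro k
    have h0 : (Measure.pi fun _ : Fin (n+1) => μ)
        (Function.eval m ⁻¹' {s : X | ¬ ψ k s = g k s}) = 0 :=
      cylinder_null μ m (ae_iff.1 (hae k))
    simpa [ae_iff] using h0
  have hstepA :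
      ∫ x : Fin (n+1) → X, (Matrix.det (Matrix.of fun m k => ψ k (x m))) ^ 2
          ∂(Measure.pi fun _ => μ)
      = ∫ x : Fin (n+1) → X, (Matrix.det (Matrix.of fun m k => g k (x m))) ^ 2
          ∂(Measure.pi fun _ => μ) := by
    refine integral_congr_ae (haeall.mono fun x hx => ?_)
    dsimp only
    have : (Matrix.of fun m k : Fin (n+1) => ψ k (x m))
        = Matrix.of fun m k : Fin (n+1) => g k (x m) := by
      ext m k; exact hx m k
    rw [this]
  -- Step B: restrict to T
  have hvanish : ∀ x : Fin (n+1) → X, x ∉ Set.pi Set.univ (fun _ : Fin (n+1) => T) →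
      (Matrix.det (Matrix.of fun m k : Fin (n+1) => g k (x m))) ^ 2 = 0 := by
    intro x hx
    rw [Set.mem_pi] at hx
    push_neg at hx
    obtain ⟨m, -, hm⟩ := hx
    have : Matrix.det (Matrix.of fun m k : Fin (n+1) => g k (x m)) = 0 := by
      refine Matrix.det_eq_zero_of_row_eq_zero m fun k => ?_
      exact hzero k _ fun hmem => hm (Set.mem_iUnion.2 ⟨k, hmem⟩)
    rw [this]
    ring
  have hstepB :
      ∫ x : Fin (n+1) → X, (Matrix.det (Matrix.of fun m k => g k (x m))) ^ 2
          ∂(Measure.pi fun _ => μ)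
      = ∫ x : Fin (n+1) → X, (Matrix.det (Matrix.of fun m k => g k (x m))) ^ 2
          ∂(Measure.pi fun _ => μ.restrict T) := by
    rw [pi_restrict_eq μ hTm]
    exact (setIntegral_eq_integral_of_forall_compl_eq_zero hvanish).symm
  -- Step C: key lemma
  have hgℒ : ∀ k, MemLp (g k) 2 (μ.restrict T) := fun k =>
    ((hψℒ k).ae_eq (hae k)).restrict T
  have hkey := key_fubini (μ.restrict T) g hgℒ
  -- Step D: Gram entries
  have hGram : ∀ k l, ∫ s, g k s * g l s ∂(μ.restrict T) = ∫ s, ψ k s * ψ l s ∂μ := by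
    intro k l
    have h1 : ∫ s in T, g k s * g l s ∂μ = ∫ s, g k s * g l s ∂μ :=
      setIntegral_eq_integral_of_forall_compl_eq_zero fun s hs => by
        rw [hzero k s fun hmem => hs (Set.mem_iUnion.2 ⟨k, hmem⟩), zero_mul]
    refine h1.trans (integral_congr_ae ?_)
    filter_upwards [hae k, hae l] with s h1 h2
    rw [h1, h2]
  have hGmat : (Matrix.of fun k l : Fin (n+1) => ∫ s, g k s * g l s ∂(μ.restrict T))
      = Matrix.of fun k l : Fin (n+1) => ∫ s, ψ k s * ψ l s ∂μ := by
    ext k l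
    exact hGram k l
  rw [hstepA, hstepB, hkey, hGmat]
  rw [← mul_assoc, inv_mul_cancel₀ (by exact_mod_cast Nat.factorial_ne_zero (n+1)), one_mul]
  -- Step E: evaluate the Gram determinant
  rw [det_aux _ (fun k l hk hl => by
    simp only [Matrix.of_apply, hψdef, if_neg hk, if_neg hl]
    exact horth k l)]
  congr 1
  · simp only [Matrix.of_apply, hψdef, if_pos rfl]
    exact integral_congr_ae (ae_of_all _ fun s => (sq (f s)).symm)
  · rw [← Finset.filter_ne']
    refine Finset.sum_congr rfl fun k hk => ?_
    have hk0 : k ≠ 0 := (Finset.mem_filter.1 hk).2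
    simp only [Matrix.of_apply, hψdef, if_pos rfl, if_neg hk0]
    rw [sq]
    congr 1
    exact integral_congr_ae (ae_of_all _ fun s => mul_comm _ _)
end

section
/- Let f, g ∈ L²(μ) and φ_1,…,φ_{N-1} orthonormal in L²(μ) (together with a function φ_0 so that φ_0,…,φ_{N-1} is orthonormal). Then (1/N!) ∫_{X^N} det Φ_{φ_0,f}(x_{1:N}) · det Φ_{φ_1,f}(x_{1:N}) dμ^{⊗N}(x) = ⟨f, φ_0⟩⟨f, φ_1⟩, where Φ_{φ_0,f} (resp. Φ_{φ_1,f}) replaces the first (resp. second) column of Φ(x_{1:N}) by f(x_{1:N}). -/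
open MeasureTheory Matrix BigOperators


open MeasureTheory Matrix BigOperators Set

namespace EZaux

variable {X : Type*} [MeasurableSpace X]

lemma pi_eval_preimage_null' (μ : Measure X) {N : ℕ} {D : Set X} (hD : μ D = 0) (n : Fin N) :
    Measure.pi (fun _ => μ) (Function.eval n ⁻¹' D) = 0 := by
  rcases exists_measurable_superset_of_null hD with ⟨t, hst, htm, hμt⟩
  refine measure_mono_null (Set.preimage_mono hst) ?_
  have hbox : (Function.eval n ⁻¹' t : Set (Fin N → X)) =
      Set.univ.pi (Function.update (fun _ => Set.univ) n t) := by
    ext x; simp [Function.update_apply]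
  have hms : ∀ i : Fin N, MeasurableSet (Function.update (fun _ => Set.univ) n t i) := by
    intro i
    rcases eq_or_ne i n with rfl | h
    · simpa using htm
    · simp [Function.update_of_ne h]
  refine le_antisymm ?_ zero_le
  rw [hbox, Measure.pi_def,
    toMeasure_apply _ _ (MeasurableSet.pi Set.countable_univ fun i _ => hms i)]
  refine le_trans (OuterMeasure.pi_pi_le _ _) ?_
  refine le_of_eq (Finset.prod_eq_zero (Finset.mem_univ n) ?_)
  simp [hμt]

lemma pi_restrict_eq (μ : Measure X) (N : ℕ) {S : Set X} (hS : MeasurableSet S)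
    [SigmaFinite (μ.restrict S)] :
    Measure.pi (fun _ : Fin N => μ.restrict S)
      = (Measure.pi fun _ : Fin N => μ).restrict (Set.univ.pi fun _ => S) := by
  refine Measure.pi_eq fun s hs => ?_
  rw [Measure.restrict_apply (MeasurableSet.univ_pi hs)]
  have hbox : (Set.univ.pi s) ∩ (Set.univ.pi fun _ => S)
      = Set.univ.pi (fun i => s i ∩ S) := (Set.pi_inter_distrib).symm
  rw [hbox]
  have hms : ∀ i : Fin N, MeasurableSet (s i ∩ S) := fun i => (hs i).inter hS
  refine le_antisymm ?_ ?_
  · rw [Measure.pi_def, toMeasure_apply _ _ (MeasurableSet.pi Set.countable_univ fun i _ => hms i)]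
    refine le_trans (OuterMeasure.pi_pi_le _ _) (le_of_eq ?_)
    refine Finset.prod_congr rfl fun i _ => ?_
    rw [Measure.restrict_apply (hs i)]
    rfl
  · have key : ∀ u : Set (Fin N → X), MeasurableSet u →
        Measure.pi' (fun _ : Fin N => μ.restrict S) u ≤ Measure.pi (fun _ : Fin N => μ) u := by
      intro u hu
      rw [Measure.pi_def, toMeasure_apply _ _ hu]
      have hle : (Measure.pi' fun _ : Fin N => μ.restrict S).toOuterMeasure
          ≤ OuterMeasure.pi fun _ : Fin N => μ.toOuterMeasure := by
        rw [OuterMeasure.le_pi]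
        intro v _
        rw [Measure.toOuterMeasure_apply, Measure.pi'_pi]
        refine Finset.prod_le_prod' fun i _ => ?_
        rw [Measure.toOuterMeasure_apply]
        exact Measure.le_iff'.mp Measure.restrict_le_self _
      exact hle u
    calc ∏ i : Fin N, (μ.restrict S) (s i)
        = ∏ i : Fin N, (μ.restrict S) (s i ∩ S) := by
          refine Finset.prod_congr rfl fun i _ => ?_
          rw [Measure.restrict_apply (hs i), Measure.restrict_apply (hms i),
            Set.inter_assoc, Set.inter_self]
      _ = Measure.pi' (fun _ : Fin N => μ.restrict S) (Set.univ.pi fun i => s i ∩ S) :=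
          (Measure.pi'_pi _ _).symm
      _ ≤ _ := key _ (MeasurableSet.univ_pi hms)

end EZaux


open MeasureTheory Matrix BigOperators Finset

namespace EZaux

variable {X : Type*} [MeasurableSpace X]

lemma sign_cast_sq (s : ℤˣ) : ((s : ℤ) : ℝ) * ((s : ℤ) : ℝ) = 1 := by
  rcases Int.units_eq_one_or s with h | h <;> simp [h]

theorem core (μ : Measure X) [SigmaFinite μ] {N : ℕ}
    (i0 i1 : Fin N) (h01 : i0 ≠ i1)
    (φ : Fin N → X → ℝ) (f : X → ℝ)
    (hf : MemLp f 2 μ) (hφ : ∀ k, MemLp (φ k) 2 μ)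
    (horth : ∀ k l, ∫ x, φ k x * φ l x ∂μ = if k = l then (1 : ℝ) else 0) :
    ∫ x : Fin N → X,
        Matrix.det ((Matrix.of fun n k : Fin N => φ k (x n)).updateCol i0 (fun n => f (x n))) *
        Matrix.det ((Matrix.of fun n k : Fin N => φ k (x n)).updateCol i1 (fun n => f (x n)))
        ∂(Measure.pi fun _ => μ)
      = (N.factorial : ℝ) * ((∫ t, f t * φ i0 t ∂μ) * (∫ t, f t * φ i1 t ∂μ)) := by
  classical
  set a : Fin N → X → ℝ := fun c => if c = i0 then f else φ c with ha
  set b : Fin N → X → ℝ := fun c => if c = i1 then f else φ c with hb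
  have ha2 : ∀ c, MemLp (a c) 2 μ := by
    intro c; by_cases h : c = i0
    · simp only [ha, if_pos h]; exact hf
    · simp only [ha, if_neg h]; exact hφ c
  have hb2 : ∀ c, MemLp (b c) 2 μ := by
    intro c; by_cases h : c = i1
    · simp only [hb, if_pos h]; exact hf
    · simp only [hb, if_neg h]; exact hφ c
  have hint : ∀ c d, Integrable (fun t => a c t * b d t) μ := by
    intro c d
    have h1 : MemLp (a c • b d) 1 μ :=
      (hb2 d).smul (ha2 c) (p := 2) (q := 2) (r := 1)
    rw [← memLp_one_iff_integrable]
    exact h1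
  set C : Matrix (Fin N) (Fin N) ℝ := Matrix.of fun c d => ∫ t, a c t * b d t ∂μ with hC
  -- pointwise determinant expansion
  have hdet : ∀ x : Fin N → X,
      Matrix.det ((Matrix.of fun n k : Fin N => φ k (x n)).updateCol i0 (fun n => f (x n))) *
      Matrix.det ((Matrix.of fun n k : Fin N => φ k (x n)).updateCol i1 (fun n => f (x n)))
      = ∑ σ : Equiv.Perm (Fin N), ∑ τ : Equiv.Perm (Fin N),
          (((Equiv.Perm.sign σ : ℤ) : ℝ) * ((Equiv.Perm.sign τ : ℤ) : ℝ)) *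
            ∏ n, (a (σ n) (x n) * b (τ n) (x n)) := by
    intro x
    have e0 : (Matrix.of fun n k : Fin N => φ k (x n)).updateCol i0 (fun n => f (x n))
        = (Matrix.of fun c n : Fin N => a c (x n))ᵀ := by
      ext n c
      simp only [Matrix.updateCol_apply, Matrix.transpose_apply, Matrix.of_apply, ha]
      split_ifs <;> rfl
    have e1 : (Matrix.of fun n k : Fin N => φ k (x n)).updateCol i1 (fun n => f (x n))
        = (Matrix.of fun c n : Fin N => b c (x n))ᵀ := by
      ext n c
      simp only [Matrix.updateCol_apply, Matrix.transpose_apply, Matrix.of_apply, hb]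
      split_ifs <;> rfl
    rw [e0, e1, Matrix.det_transpose, Matrix.det_transpose, Matrix.det_apply',
      Matrix.det_apply', Finset.sum_mul_sum]
    refine Finset.sum_congr rfl fun σ _ => Finset.sum_congr rfl fun τ _ => ?_
    rw [Finset.prod_mul_distrib]
    simp only [Matrix.of_apply]
    ring
  -- integrability of products over the pi measure
  have hprodint : ∀ σ τ : Equiv.Perm (Fin N),
      Integrable (fun x : Fin N → X => ∏ n, (a (σ n) (x n) * b (τ n) (x n)))
        (Measure.pi fun _ => μ) := by
    intro σ τ
    letI : MeasureSpace X := ⟨μ⟩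
    haveI : SigmaFinite (volume : Measure X) := ‹SigmaFinite μ›
    exact Integrable.fintype_prod (f := fun n t => a (σ n) t * b (τ n) t) fun n => hint _ _
  have hkey : ∀ σ τ : Equiv.Perm (Fin N),
      ∫ x : Fin N → X, ∏ n, (a (σ n) (x n) * b (τ n) (x n)) ∂(Measure.pi fun _ => μ)
        = ∏ n, C (σ n) (τ n) := by
    intro σ τ
    letI : MeasureSpace X := ⟨μ⟩
    haveI : SigmaFinite (volume : Measure X) := ‹SigmaFinite μ›
    exact MeasureTheory.integral_fintype_prod_eq_prod
      (fun n t => a (σ n) t * b (τ n) t)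
  -- inner sum over τ
  have hτ : ∀ σ : Equiv.Perm (Fin N),
      ∑ τ : Equiv.Perm (Fin N), ((Equiv.Perm.sign τ : ℤ) : ℝ) * ∏ n, C (σ n) (τ n)
        = ((Equiv.Perm.sign σ : ℤ) : ℝ) * C.det := by
    intro σ
    have h1 : ∑ τ : Equiv.Perm (Fin N), ((Equiv.Perm.sign τ : ℤ) : ℝ) * ∏ n, C (σ n) (τ n)
        = ((C.submatrix σ id)ᵀ).det := by
      rw [Matrix.det_apply']
      exact Finset.sum_congr rfl fun τ _ => by
        congr 1
    rw [h1, Matrix.det_transpose, Matrix.det_permute]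
  -- determinant of C
  have hC1 : ∀ c d, c ≠ i0 → d ≠ i1 → C c d = if c = d then (1 : ℝ) else 0 := by
    intro c d hc hd
    show (∫ t, a c t * b d t ∂μ) = _
    simp only [ha, hb, if_neg hc, if_neg hd]
    exact horth c d
  have hii0 : C i0 i0 = ∫ t, f t * φ i0 t ∂μ := by
    show (∫ t, a i0 t * b i0 t ∂μ) = _
    simp only [ha, hb, if_pos rfl, if_neg h01]
  have hii1 : C i1 i1 = ∫ t, f t * φ i1 t ∂μ := by
    show (∫ t, a i1 t * b i1 t ∂μ) = _
    simp only [ha, hb, if_pos rfl, if_neg (Ne.symm h01)]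
    simp_rw [mul_comm]
  have hdetC : C.det = (∫ t, f t * φ i0 t ∂μ) * (∫ t, f t * φ i1 t ∂μ) := by
    rw [Matrix.det_apply']
    rw [Finset.sum_eq_single (1 : Equiv.Perm (Fin N))]
    · have hrest : ∏ i ∈ (Finset.univ.erase i0).erase i1, C i i = 1 := by
        refine Finset.prod_eq_one fun i hi => ?_
        rw [Finset.mem_erase, Finset.mem_erase] at hi
        rw [hC1 i i hi.2.1 hi.1]
        simp
      have hsplit : ∏ i, C i i
          = C i0 i0 * (C i1 i1 * ∏ i ∈ (Finset.univ.erase i0).erase i1, C i i) := by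
        rw [← Finset.mul_prod_erase _ _ (Finset.mem_univ i0),
          ← Finset.mul_prod_erase _ _ (Finset.mem_erase.mpr ⟨Ne.symm h01, Finset.mem_univ i1⟩)]
      simp only [Equiv.Perm.sign_one, Equiv.Perm.one_apply, Units.val_one, Int.cast_one, one_mul]
      rw [hsplit, hrest, mul_one, hii0, hii1]
    · intro σ _ hσ
      suffices h : ∏ i, C (σ i) i = 0 by rw [h, mul_zero]
      by_contra hne
      have hall : ∀ i, C (σ i) i ≠ 0 := fun i h0 =>
        hne (Finset.prod_eq_zero (Finset.mem_univ i) h0)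
      have hfix0 : σ i0 = i0 := by
        by_contra hσ0
        apply hall i0
        rw [hC1 (σ i0) i0 hσ0 h01]
        simp [hσ0]
      have hfix : ∀ d, d ≠ i1 → σ d = d := by
        intro d hd
        rcases eq_or_ne d i0 with rfl | hd0
        · exact hfix0
        by_contra hσd
        apply hall d
        have hc : σ d ≠ i0 := fun h => hd0 (σ.injective (h.trans hfix0.symm))
        rw [hC1 (σ d) d hc hd]
        simp [hσd]
      have hfix1 : σ i1 = i1 := by
        by_contra h
        exact h (σ.injective (hfix _ h))
      exact hσ (Equiv.ext fun d => by
        rcases eq_or_ne d i1 with rfl | hd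
        · simpa using hfix1
        · simpa using hfix d hd)
    · intro h; exact absurd (Finset.mem_univ _) h
  -- put everything together
  calc ∫ x : Fin N → X,
        Matrix.det ((Matrix.of fun n k : Fin N => φ k (x n)).updateCol i0 (fun n => f (x n))) *
        Matrix.det ((Matrix.of fun n k : Fin N => φ k (x n)).updateCol i1 (fun n => f (x n)))
        ∂(Measure.pi fun _ => μ)
      = ∫ x : Fin N → X, ∑ σ : Equiv.Perm (Fin N), ∑ τ : Equiv.Perm (Fin N),
          (((Equiv.Perm.sign σ : ℤ) : ℝ) * ((Equiv.Perm.sign τ : ℤ) : ℝ)) *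
            ∏ n, (a (σ n) (x n) * b (τ n) (x n)) ∂(Measure.pi fun _ => μ) :=
        integral_congr_ae (Filter.Eventually.of_forall fun x => hdet x)
    _ = ∑ σ : Equiv.Perm (Fin N), ∑ τ : Equiv.Perm (Fin N),
          (((Equiv.Perm.sign σ : ℤ) : ℝ) * ((Equiv.Perm.sign τ : ℤ) : ℝ)) *
            ∏ n, C (σ n) (τ n) := by
        rw [integral_finset_sum _ fun σ _ => integrable_finset_sum _ fun τ _ =>
          (hprodint σ τ).const_mul _]
        refine Finset.sum_congr rfl fun σ _ => ?_
        rw [integral_finset_sum _ fun τ _ => (hprodint σ τ).const_mul _]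
        refine Finset.sum_congr rfl fun τ _ => ?_
        rw [integral_const_mul, hkey σ τ]
    _ = ∑ σ : Equiv.Perm (Fin N),
          ((Equiv.Perm.sign σ : ℤ) : ℝ) * (((Equiv.Perm.sign σ : ℤ) : ℝ) * C.det) := by
        refine Finset.sum_congr rfl fun σ _ => ?_
        rw [← hτ σ, Finset.mul_sum]
        refine Finset.sum_congr rfl fun τ _ => by ring
    _ = ∑ _σ : Equiv.Perm (Fin N), C.det := by
        refine Finset.sum_congr rfl fun σ _ => ?_
        rw [← mul_assoc, sign_cast_sq, one_mul]
    _ = (N.factorial : ℝ) * ((∫ t, f t * φ i0 t ∂μ) * (∫ t, f t * φ i1 t ∂μ)) := by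
        rw [Finset.sum_const, Finset.card_univ, Fintype.card_perm, Fintype.card_fin,
          nsmul_eq_mul, hdetC]

end EZaux


open MeasureTheory Matrix BigOperators

namespace EZaux

variable {X : Type*} [MeasurableSpace X]

lemma base_ae (μ : Measure X) {N : ℕ} {g g' : X → ℝ} (hgg' : g =ᵐ[μ] g') (n : Fin N) :
    ∀ᵐ x ∂(Measure.pi fun _ : Fin N => μ), g (x n) = g' (x n) := by
  have hD : μ {t | ¬ g t = g' t} = 0 := ae_iff.mp hgg'
  rw [ae_iff]
  exact EZaux.pi_eval_preimage_null' μ hD n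

end EZaux


/-- Cross moment of the two first column-replaced determinants, the key identity
for the zero covariance of the EZ coordinates. -/
theorem ez_cross_moment
    {X : Type*} [MeasurableSpace X] (μ : Measure X) (N : ℕ) (hN : 1 < N)
    (φ : Fin N → X → ℝ) (f : X → ℝ)
    (hf : MemLp f 2 μ) (hφ : ∀ k, MemLp (φ k) 2 μ)
    (horth : ∀ k l, ∫ x, φ k x * φ l x ∂μ = if k = l then (1 : ℝ) else 0) :
    (Nat.factorial N : ℝ)⁻¹ *
      ∫ x : Fin N → X,
        Matrix.det ((Matrix.of fun n k : Fin N => φ k (x n)).updateCol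
            ⟨0, Nat.lt_of_lt_of_le Nat.zero_lt_one hN.le⟩ (fun n => f (x n))) *
        Matrix.det ((Matrix.of fun n k : Fin N => φ k (x n)).updateCol
            ⟨1, hN⟩ (fun n => f (x n)))
        ∂(Measure.pi fun _ => μ)
      = (∫ t, f t * φ ⟨0, Nat.lt_of_lt_of_le Nat.zero_lt_one hN.le⟩ t ∂μ) *
        (∫ t, f t * φ ⟨1, hN⟩ t ∂μ) := by
  classical
  set I0 : Fin N := ⟨0, Nat.lt_of_lt_of_le Nat.zero_lt_one hN.le⟩ with hI0
  set I1 : Fin N := ⟨1, hN⟩ with hI1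
  have h01 : I0 ≠ I1 := by simp [hI0, hI1, Fin.ext_iff]
  -- Stage A: replace by strongly measurable representatives
  set f' : X → ℝ := hf.1.mk f with hf'def
  have hff' : f =ᵐ[μ] f' := hf.1.ae_eq_mk
  have hf'm : StronglyMeasurable f' := hf.1.stronglyMeasurable_mk
  set φ' : Fin N → X → ℝ := fun k => (hφ k).1.mk (φ k) with hφ'def
  have hφφ' : ∀ k, φ k =ᵐ[μ] φ' k := fun k => (hφ k).1.ae_eq_mk
  have hφ'm : ∀ k, StronglyMeasurable (φ' k) := fun k => (hφ k).1.stronglyMeasurable_mk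
  have hf'2 : MemLp f' 2 μ := hf.ae_eq hff'
  have hφ'2 : ∀ k, MemLp (φ' k) 2 μ := fun k => (hφ k).ae_eq (hφφ' k)
  have horth' : ∀ k l, ∫ x, φ' k x * φ' l x ∂μ = if k = l then (1 : ℝ) else 0 := by
    intro k l
    rw [← horth k l]
    exact integral_congr_ae (((hφφ' k).symm).mul ((hφφ' l).symm))
  have hRHS0 : (∫ t, f t * φ I0 t ∂μ) = ∫ t, f' t * φ' I0 t ∂μ :=
    integral_congr_ae (hff'.mul (hφφ' I0))
  have hRHS1 : (∫ t, f t * φ I1 t ∂μ) = ∫ t, f' t * φ' I1 t ∂μ :=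
    integral_congr_ae (hff'.mul (hφφ' I1))
  have hae : ∀ᵐ x ∂(Measure.pi fun _ : Fin N => μ),
      (∀ n, f (x n) = f' (x n)) ∧ (∀ n, ∀ k, φ k (x n) = φ' k (x n)) := by
    refine (ae_all_iff.mpr fun n => EZaux.base_ae μ hff' n).and ?_
    exact ae_all_iff.mpr fun n => ae_all_iff.mpr fun k => EZaux.base_ae μ (hφφ' k) n
  have hLHS : ∫ x : Fin N → X,
        Matrix.det ((Matrix.of fun n k : Fin N => φ k (x n)).updateCol I0 (fun n => f (x n))) *
        Matrix.det ((Matrix.of fun n k : Fin N => φ k (x n)).updateCol I1 (fun n => f (x n)))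
        ∂(Measure.pi fun _ => μ)
      = ∫ x : Fin N → X,
        Matrix.det ((Matrix.of fun n k : Fin N => φ' k (x n)).updateCol I0 (fun n => f' (x n))) *
        Matrix.det ((Matrix.of fun n k : Fin N => φ' k (x n)).updateCol I1 (fun n => f' (x n)))
        ∂(Measure.pi fun _ => μ) := by
    refine integral_congr_ae (hae.mono fun x hx => ?_)
    have e : ∀ j : Fin N,
        (Matrix.of fun n k : Fin N => φ k (x n)).updateCol j (fun n => f (x n))
          = (Matrix.of fun n k : Fin N => φ' k (x n)).updateCol j (fun n => f' (x n)) := by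
      intro j
      ext n c
      simp only [Matrix.updateCol_apply, Matrix.of_apply]
      split_ifs
      · exact hx.1 n
      · exact hx.2 n c
    dsimp only
    rw [e I0, e I1]
  rw [hLHS, hRHS0, hRHS1]
  -- Stage B: restrict to a sigma-finite support set
  obtain ⟨tf, htfm, htf0, htfσ⟩ :=
    (hf'2.finStronglyMeasurable_of_stronglyMeasurable hf'm two_ne_zero
      ENNReal.ofNat_ne_top).exists_set_sigmaFinite
  have hTk : ∀ k, ∃ t, MeasurableSet t ∧ (∀ x ∈ tᶜ, φ' k x = 0) ∧
      SigmaFinite (μ.restrict t) := fun k =>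
    ((hφ'2 k).finStronglyMeasurable_of_stronglyMeasurable (hφ'm k) two_ne_zero
      ENNReal.ofNat_ne_top).exists_set_sigmaFinite
  choose T hTm hT0 hTσ using hTk
  set S : Set X := tf ∪ ⋃ k, T k with hSdef
  have hSm : MeasurableSet S := htfm.union (MeasurableSet.iUnion hTm)
  have hfS : ∀ x, x ∉ S → f' x = 0 := by
    intro x hx
    exact htf0 x (fun htf => hx (Set.mem_union_left _ htf))
  have hφS : ∀ k x, x ∉ S → φ' k x = 0 := by
    intro k x hx
    refine hT0 k x (fun ht => hx ?_)
    exact Set.mem_union_right _ (Set.mem_iUnion.mpr ⟨k, ht⟩)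
  haveI hσS : SigmaFinite (μ.restrict S) := by
    haveI : ∀ o : Option (Fin N), SigmaFinite (μ.restrict (o.elim tf T)) := by
      intro o; cases o
      · exact htfσ
      · exact hTσ _
    refine MeasureTheory.Measure.sigmaFinite_of_le (Measure.sum fun o : Option (Fin N) => μ.restrict (o.elim tf T)) ?_
    have hSeq : S = ⋃ o : Option (Fin N), o.elim tf T := by
      rw [hSdef, Set.iUnion_option]
      rfl
    rw [hSeq]
    exact Measure.restrict_iUnion_le
  -- orthonormality w.r.t. the restricted measure
  have horthS : ∀ k l, ∫ x, φ' k x * φ' l x ∂(μ.restrict S) = if k = l then (1 : ℝ) else 0 := by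
    intro k l
    rw [← horth' k l]
    exact setIntegral_eq_integral_of_forall_compl_eq_zero fun x hx => by
      rw [hφS k x hx, zero_mul]
  have hcore := EZaux.core (μ.restrict S) I0 I1 h01 φ' f'
    (hf'2.restrict S) (fun k => (hφ'2 k).restrict S) horthS
  -- the integrand vanishes outside the box S^N
  have hvanish : ∀ x : Fin N → X, x ∉ Set.univ.pi (fun _ : Fin N => S) →
      Matrix.det ((Matrix.of fun n k : Fin N => φ' k (x n)).updateCol I0 (fun n => f' (x n))) *
      Matrix.det ((Matrix.of fun n k : Fin N => φ' k (x n)).updateCol I1 (fun n => f' (x n)))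
        = 0 := by
    intro x hx
    obtain ⟨n, hn⟩ : ∃ n, x n ∉ S := by
      by_contra h
      push_neg at h
      exact hx (fun n _ => h n)
    have hrow : ∀ j : Fin N, ∀ c,
        ((Matrix.of fun n k : Fin N => φ' k (x n)).updateCol j (fun n => f' (x n))) n c = 0 := by
      intro j c
      simp only [Matrix.updateCol_apply, Matrix.of_apply]
      split_ifs
      · exact hfS _ hn
      · exact hφS _ _ hn
    rw [Matrix.det_eq_zero_of_row_eq_zero n (hrow I0), zero_mul]
  have hres : ∫ x : Fin N → X,
        Matrix.det ((Matrix.of fun n k : Fin N => φ' k (x n)).updateCol I0 (fun n => f' (x n))) *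
        Matrix.det ((Matrix.of fun n k : Fin N => φ' k (x n)).updateCol I1 (fun n => f' (x n)))
        ∂(Measure.pi fun _ => μ)
      = ∫ x : Fin N → X,
        Matrix.det ((Matrix.of fun n k : Fin N => φ' k (x n)).updateCol I0 (fun n => f' (x n))) *
        Matrix.det ((Matrix.of fun n k : Fin N => φ' k (x n)).updateCol I1 (fun n => f' (x n)))
        ∂(Measure.pi fun _ => μ.restrict S) := by
    rw [EZaux.pi_restrict_eq μ N hSm]
    exact (setIntegral_eq_integral_of_forall_compl_eq_zero hvanish).symm
  -- transfer the RHS integrals to the restricted measure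
  have hm0 : ∫ t, f' t * φ' I0 t ∂(μ.restrict S) = ∫ t, f' t * φ' I0 t ∂μ :=
    setIntegral_eq_integral_of_forall_compl_eq_zero fun x hx => by rw [hfS x hx, zero_mul]
  have hm1 : ∫ t, f' t * φ' I1 t ∂(μ.restrict S) = ∫ t, f' t * φ' I1 t ∂μ :=
    setIntegral_eq_integral_of_forall_compl_eq_zero fun x hx => by rw [hfS x hx, zero_mul]
  rw [hres, hcore, hm0, hm1, ← mul_assoc,
    inv_mul_cancel₀ (Nat.cast_ne_zero.mpr (Nat.factorial_ne_zero N)), one_mul]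
end

section
/- Let μ be a finite measure on X with μ(X) > 0, let φ_0 = μ(X)^{-1/2} (constant) and φ_0,…,φ_{N-1} be orthonormal in L²(μ). If f ∈ L²(μ) lies in span{φ_0,…,φ_{N-1}}, then for μ^{⊗N}-almost every sample (x_1,…,x_N) of the projection DPP, the EZ estimator is exact: μ(X)^{1/2} det Φ_{φ_0,f}(x_{1:N}) / det Φ(x_{1:N}) = ∫_X f dμ. -/
open MeasureTheory Matrix BigOperators

/-- If `f` lies in the span of the orthonormal functions (with `φ₀` constant),
the EZ estimator is almost surely exact for `∫ f dμ` under the projection DPP. -/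
theorem ez_estimator_exact_in_span
    {X : Type*} [MeasurableSpace X] (μ : Measure X) [IsFiniteMeasure μ]
    (hμ : 0 < (μ Set.univ).toReal) (N : ℕ) (hN : 0 < N)
    (φ : Fin N → X → ℝ) (f : X → ℝ)
    (hf : MemLp f 2 μ) (hφ : ∀ k, MemLp (φ k) 2 μ)
    (horth : ∀ k l, ∫ x, φ k x * φ l x ∂μ = if k = l then (1 : ℝ) else 0)
    (hφ0 : ∀ t, φ ⟨0, hN⟩ t = (Real.sqrt (μ Set.univ).toReal)⁻¹)
    (hspan : f =ᵐ[μ] fun t => ∑ k, (∫ s, f s * φ k s ∂μ) * φ k t)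
    (P : Measure (Fin N → X))
    (hP : P = (Measure.pi fun _ : Fin N => μ).withDensity
      (fun x => ENNReal.ofReal ((Nat.factorial N : ℝ)⁻¹ *
        (Matrix.det (Matrix.of fun n l : Fin N => φ l (x n))) ^ 2))) :
    ∀ᵐ x ∂P,
      Real.sqrt (μ Set.univ).toReal *
        (Matrix.det ((Matrix.of fun n l : Fin N => φ l (x n)).updateCol ⟨0, hN⟩
            (fun n => f (x n)))
          / Matrix.det (Matrix.of fun n l : Fin N => φ l (x n)))
      = ∫ t, f t ∂μ := by
  subst hP
  set π : Measure (Fin N → X) := Measure.pi fun _ : Fin N => μ with hπ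
  set ρ : (Fin N → X) → ENNReal := fun x => ENNReal.ofReal ((Nat.factorial N : ℝ)⁻¹ *
    (Matrix.det (Matrix.of fun n l : Fin N => φ l (x n))) ^ 2) with hρ
  have hac : π.withDensity ρ ≪ π := withDensity_absolutelyContinuous _ _
  -- measurable versions of φ
  set ψ : Fin N → X → ℝ := fun k => (hφ k).1.mk (φ k) with hψdef
  have hψm : ∀ k, Measurable (ψ k) := fun k => ((hφ k).1.stronglyMeasurable_mk).measurable
  have hψae : ∀ k, φ k =ᵐ[μ] ψ k := fun k => (hφ k).1.ae_eq_mk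
  -- span property holds at every coordinate, π-a.e.
  have hA : ∀ᵐ x ∂π, ∀ n, f (x n) = ∑ k, (∫ s, f s * φ k s ∂μ) * φ k (x n) := by
    rw [ae_all_iff]
    intro n
    exact (Measure.tendsto_eval_ae_ae (μ := fun _ : Fin N => μ) (i := n)).eventually hspan
  -- φ and ψ agree at every coordinate, π-a.e.
  have hB : ∀ᵐ x ∂π, ∀ n k, φ k (x n) = ψ k (x n) := by
    rw [ae_all_iff]
    intro n
    rw [ae_all_iff]
    intro k
    exact (Measure.tendsto_eval_ae_ae (μ := fun _ : Fin N => μ) (i := n)).eventually (hψae k)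
  have hBdet : ∀ᵐ x ∂π,
      Matrix.det (Matrix.of fun n l : Fin N => φ l (x n))
        = Matrix.det (Matrix.of fun n l : Fin N => ψ l (x n)) := by
    filter_upwards [hB] with x hx
    congr 1
    ext n l
    exact hx n l
  -- the "bad" set where the measurable determinant vanishes
  set A : Set (Fin N → X) := {x | Matrix.det (Matrix.of fun n l : Fin N => ψ l (x n)) = 0}
    with hA_def
  have hdetmeas : Measurable fun x : Fin N → X =>
      Matrix.det (Matrix.of fun n l : Fin N => ψ l (x n)) := by
    simp only [Matrix.det_apply']
    refine Finset.measurable_sum _ fun σ _ => Measurable.const_mul ?_ _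
    exact Finset.measurable_prod _ fun i _ =>
      (hψm i).comp (measurable_pi_apply _)
  have hAmeas : MeasurableSet A := hdetmeas (MeasurableSet.singleton 0)
  have hPA : (π.withDensity ρ) A = 0 := by
    rw [withDensity_apply _ hAmeas]
    have h0 : ∀ᵐ x ∂(π.restrict A), ρ x = 0 := by
      filter_upwards [ae_restrict_of_ae hBdet,
        ae_restrict_mem hAmeas] with x hx hxA
      simp only [hρ, hx, hA_def, Set.mem_setOf_eq] at *
      rw [hxA]
      simp
    calc ∫⁻ x in A, ρ x ∂π = ∫⁻ _ in A, 0 ∂π := lintegral_congr_ae h0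
      _ = 0 := lintegral_zero
  have hdet_ne : ∀ᵐ x ∂(π.withDensity ρ),
      Matrix.det (Matrix.of fun n l : Fin N => φ l (x n)) ≠ 0 := by
    have h1 : ∀ᵐ x ∂(π.withDensity ρ), x ∉ A := by
      rw [ae_iff]
      simpa using hPA
    filter_upwards [h1, hac.ae_le hBdet] with x hx1 hx2
    rw [hx2]
    exact hx1
  -- now conclude
  filter_upwards [hdet_ne, hac.ae_le hA] with x hxd hxs
  set M : Matrix (Fin N) (Fin N) ℝ := Matrix.of fun n l : Fin N => φ l (x n) with hM
  set c : Fin N → ℝ := fun k => ∫ s, f s * φ k s ∂μ with hc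
  have hupd : (M.updateCol ⟨0, hN⟩ (fun n => f (x n))).det = c ⟨0, hN⟩ * M.det := by
    have : (fun n => f (x n)) = fun n => ∑ k, c k • M n k := by
      funext n
      simpa [hM, hc] using hxs n
    rw [this, Matrix.det_updateCol_sum]
    simp
  have hc0 : c ⟨0, hN⟩ = (Real.sqrt (μ Set.univ).toReal)⁻¹ * ∫ t, f t ∂μ := by
    simp only [hc]
    have : (fun s => f s * φ ⟨0, hN⟩ s)
        = fun s => f s * (Real.sqrt (μ Set.univ).toReal)⁻¹ := by
      funext s; rw [hφ0]
    rw [this, integral_mul_const, mul_comm]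
  have hsq : Real.sqrt (μ Set.univ).toReal ≠ 0 := ne_of_gt (Real.sqrt_pos.mpr hμ)
  rw [hupd, hc0]
  field_simp
end
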